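/- Productivity I (Lévy-Longo trees without ⊥): if t and all the types in Γ are •^∞-free and Γ ⊢ e : t is derivable in λ•→, then the Lévy-Longo tree LT(e) of e contains no occurrence of ⊥. -/

import Mathlib

namespace LambdaBullet

/-- Head constructors for pseudo-types. -/
inductive TyHead : Type
  | var (n : ℕ)
  | nat
  | prod
  | arrow
  | bullet

/-- Arity of each pseudo-type constructor. -/
def tyArity : TyHead → Type
  | .var _ => Empty
  | .nat => Empty
  | .prod => Bool
  | .arrow => Bool
  | .bullet => Unit

/-- The polynomial functor whose M-type is the type of pseudo-types. -/
def TyP : PFunctor := ⟨TyHead, tyArity⟩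

/-- Pseudo-types: possibly infinite coinductively generated trees. -/
abbrev PseudoType := TyP.M

/-- Type variable. -/
def tvar (n : ℕ) : PseudoType := PFunctor.M.mk ⟨TyHead.var n, Empty.elim⟩
/-- The type `Nat`. -/
def tnat : PseudoType := PFunctor.M.mk ⟨TyHead.nat, Empty.elim⟩
/-- Product type. -/
def tprod (t s : PseudoType) : PseudoType :=
  PFunctor.M.mk ⟨TyHead.prod, fun b => bif b then s else t⟩
/-- Arrow type. -/
def tarrow (t s : PseudoType) : PseudoType :=
  PFunctor.M.mk ⟨TyHead.arrow, fun b => bif b then s else t⟩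
/-- Delay type `•t`. -/
def tbullet (t : PseudoType) : PseudoType :=
  PFunctor.M.mk ⟨TyHead.bullet, fun _ => t⟩
/-- Iterated delay `•ⁿ t`. -/
def tbulletN (n : ℕ) (t : PseudoType) : PseudoType := tbullet^[n] t

/-- `Child t s` holds iff `s` is an immediate subtree of `t`. -/
def Child (t s : PseudoType) : Prop := ∃ b : TyP.B t.dest.1, t.dest.2 b = s

/-- `Subtree t s` holds iff `s` is a subtree of `t`. -/
def Subtree (t s : PseudoType) : Prop := Relation.ReflTransGen Child t s

/-- A pseudo-type is regular if it has finitely many distinct subtrees. -/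
def Regular (t : PseudoType) : Prop := {s | Subtree t s}.Finite

/-- The root of the tree is a `•`. -/
def headIsBullet (t : PseudoType) : Prop := t.dest.1 = TyHead.bullet

/-- A pseudo-type is guarded if every infinite path in its tree has
infinitely many `•`'s. -/
def Guarded (t : PseudoType) : Prop :=
  ∀ f : ℕ → PseudoType, f 0 = t → (∀ n, Child (f n) (f (n + 1))) →
    ∀ N, ∃ n, N ≤ n ∧ headIsBullet (f n)

/-- A type is a regular and guarded pseudo-type. -/
def IsType (t : PseudoType) : Prop := Regular t ∧ Guarded t

/-- `•^∞`: the unique pseudo-type satisfying `•^∞ = • •^∞`. -/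
def binf : PseudoType := PFunctor.M.corec (fun _ : Unit => ⟨TyHead.bullet, fun _ => ()⟩) ()

/-- Constants. -/
inductive Const : Type
  | pair
  | cfst
  | csnd
  | zero
  | succ

/-- Expressions (with de Bruijn indices for variables). -/
inductive Expr : Type
  | var (x : ℕ)
  | const (k : Const)
  | lam (e : Expr)
  | app (e₁ e₂ : Expr)

def liftRen (f : ℕ → ℕ) : ℕ → ℕ
  | 0 => 0
  | n + 1 => f n + 1

def rename (f : ℕ → ℕ) : Expr → Expr
  | .var n => .var (f n)
  | .const k => .const k
  | .lam e => .lam (rename (liftRen f) e)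
  | .app a b => .app (rename f a) (rename f b)

def liftSub (ρ : ℕ → Expr) : ℕ → Expr
  | 0 => .var 0
  | n + 1 => rename Nat.succ (ρ n)

/-- Simultaneous (capture-avoiding) substitution. -/
def substE (ρ : ℕ → Expr) : Expr → Expr
  | .var n => ρ n
  | .const k => .const k
  | .lam e => .lam (substE (liftSub ρ) e)
  | .app a b => .app (substE ρ a) (substE ρ b)

/-- `subst0 e f` is `e[f/x]` for the topmost variable `x`. -/
def subst0 (e f : Expr) : Expr :=
  substE (fun n => match n with | 0 => f | n + 1 => .var n) e

/-- The pair `⟨e₁, e₂⟩`. -/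
def mkPair (e₁ e₂ : Expr) : Expr := .app (.app (.const .pair) e₁) e₂

/-- Evaluation contexts E ::= [] | E e | fst E | snd E | succ E. -/
inductive ECtx : Type
  | hole
  | app (E : ECtx) (e : Expr)
  | fst (E : ECtx)
  | snd (E : ECtx)
  | succ (E : ECtx)

/-- Plugging an expression into an evaluation context. -/
def ECtx.plug : ECtx → Expr → Expr
  | .hole, e => e
  | .app E f, e => .app (E.plug e) f
  | .fst E, e => .app (.const .cfst) (E.plug e)
  | .snd E, e => .app (.const .csnd) (E.plug e)
  | .succ E, e => .app (.const .succ) (E.plug e)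

/-- Head reduction rules. -/
inductive HeadRed : Expr → Expr → Prop
  | beta (e f) : HeadRed (.app (.lam e) f) (subst0 e f)
  | fst (e₁ e₂) : HeadRed (.app (.const .cfst) (mkPair e₁ e₂)) e₁
  | snd (e₁ e₂) : HeadRed (.app (.const .csnd) (mkPair e₁ e₂)) e₂

/-- Weak head (call-by-name) reduction: head rules closed under evaluation contexts. -/
def Red (a b : Expr) : Prop :=
  ∃ (E : ECtx) (e f : Expr), HeadRed e f ∧ a = E.plug e ∧ b = E.plug f

/-- Many-step reduction. -/
def RedStar : Expr → Expr → Prop := Relation.ReflTransGen Red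

/-- (Weak head) normal forms. -/
def NormalForm (e : Expr) : Prop := ∀ f, ¬ Red e f

/-- Typing contexts: finite maps from (de Bruijn) variables to types. -/
def Ctx : Type := ℕ → Option PseudoType

/-- Extending a typing context with a type for the topmost variable. -/
def Ctx.cons (t : PseudoType) (Γ : Ctx) : Ctx :=
  fun n => match n with | 0 => some t | n + 1 => Γ n

/-- The type assignment κ for constants. -/
inductive KappaTy : Const → PseudoType → Prop
  | pair {t s} : IsType t → IsType s →
      KappaTy .pair (tarrow t (tarrow s (tprod t s)))
  | fst {t s} : IsType t → IsType s →
      KappaTy .cfst (tarrow (tprod t s) t)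
  | snd {t s} : IsType t → IsType s →
      KappaTy .csnd (tarrow (tprod t s) s)
  | zero : KappaTy .zero tnat
  | succ : KappaTy .succ (tarrow tnat tnat)

/-- The type assignment system λ•→. -/
inductive Types : Ctx → Expr → PseudoType → Prop
  | ax {Γ x t} : Γ x = some t → IsType t → Types Γ (.var x) t
  | const {Γ k t} : KappaTy k t → Types Γ (.const k) t
  | bulletI {Γ e t} : Types Γ e t → Types Γ e (tbullet t)
  | arrowI {Γ e n t s} :
      Types (Ctx.cons (tbulletN n t) Γ) e (tbulletN n s) →
      Types Γ (.lam e) (tbulletN n (tarrow t s))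
  | arrowE {Γ e₁ e₂ n t s} :
      Types Γ e₁ (tbulletN n (tarrow t s)) → Types Γ e₂ (tbulletN n t) →
      Types Γ (.app e₁ e₂) (tbulletN n s)


/-- The spine application `h e₁ … eₙ`. -/
def spineApp (h : Expr) (args : List Expr) : Expr := args.foldl Expr.app h

/-- `e` has a weak head normal form. -/
def HasWhnf (e : Expr) : Prop := ∃ f, RedStar e f ∧ NormalForm f

/-- A pseudo-type is `•^∞`-free if none of its subtrees is `•^∞`. -/
def BinfFree (t : PseudoType) : Prop := ∀ s, Subtree t s → s ≠ binf

/-- One step of the Lévy-Longo tree unfolding: `LLSub e a` holds iff `a` is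
an immediate subterm of the Lévy-Longo tree decomposition of `e`
(the body of the abstraction, or one of the arguments of the variable-
or constant-headed spine that `e` reduces to). -/
inductive LLSub : Expr → Expr → Prop
  | lam {e f} : RedStar e (.lam f) → LLSub e f
  | var {e x args a} : RedStar e (spineApp (.var x) args) → a ∈ args → LLSub e a
  | const {e k args a} : RedStar e (spineApp (.const k) args) →
      NormalForm (spineApp (.const k) args) → a ∈ args → LLSub e a

/-- The Lévy-Longo tree of `e` has no `⊥`: every expression reachable in the
coinductive unfolding of the Lévy-Longo tree of `e` has a weak head normal
form (`⊥` is placed at a node exactly when the corresponding expression has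
no weak head normal form). -/
def LLTBotFree (e : Expr) : Prop :=
  ∀ f, Relation.ReflTransGen LLSub e f → HasWhnf f

open PFunctor Relation

abbrev thead (t : PseudoType) : TyHead := t.dest.1

lemma dest_tbullet (t : PseudoType) : (tbullet t).dest = ⟨TyHead.bullet, fun _ => t⟩ :=
  M.dest_mk _
lemma dest_tarrow (a b : PseudoType) :
    (tarrow a b).dest = ⟨TyHead.arrow, fun x => bif x then b else a⟩ := M.dest_mk _
lemma dest_tprod (a b : PseudoType) :
    (tprod a b).dest = ⟨TyHead.prod, fun x => bif x then b else a⟩ := M.dest_mk _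
lemma dest_tnat : (tnat).dest = ⟨TyHead.nat, Empty.elim⟩ := M.dest_mk _
lemma dest_tvar (n : ℕ) : (tvar n).dest = ⟨TyHead.var n, Empty.elim⟩ := M.dest_mk _

lemma thead_tbullet (t : PseudoType) : thead (tbullet t) = TyHead.bullet := by
  rw [thead, dest_tbullet]
lemma thead_tarrow (a b : PseudoType) : thead (tarrow a b) = TyHead.arrow := by
  rw [thead, dest_tarrow]
lemma thead_tprod (a b : PseudoType) : thead (tprod a b) = TyHead.prod := by
  rw [thead, dest_tprod]
lemma thead_tnat : thead tnat = TyHead.nat := by rw [thead, dest_tnat]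
lemma thead_tvar (n : ℕ) : thead (tvar n) = TyHead.var n := by rw [thead, dest_tvar]

lemma tbullet_inj {a b : PseudoType} (h : tbullet a = tbullet b) : a = b := by
  have h2 := congrArg PFunctor.M.dest h
  rw [dest_tbullet, dest_tbullet] at h2
  have h3 := (Sigma.mk.inj_iff.mp h2).2
  exact congrFun (eq_of_heq h3) ()

lemma tarrow_inj {a b c d : PseudoType} (h : tarrow a b = tarrow c d) : a = c ∧ b = d := by
  have h2 := congrArg PFunctor.M.dest h
  rw [dest_tarrow, dest_tarrow] at h2
  have h3 := eq_of_heq (Sigma.mk.inj_iff.mp h2).2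
  exact ⟨congrFun h3 false, congrFun h3 true⟩

lemma tprod_inj {a b c d : PseudoType} (h : tprod a b = tprod c d) : a = c ∧ b = d := by
  have h2 := congrArg PFunctor.M.dest h
  rw [dest_tprod, dest_tprod] at h2
  have h3 := eq_of_heq (Sigma.mk.inj_iff.mp h2).2
  exact ⟨congrFun h3 false, congrFun h3 true⟩

lemma eq_tbullet_of_dest {t : PseudoType} {ch} (h : t.dest = ⟨TyHead.bullet, ch⟩) :
    t = tbullet (ch ()) := by
  have hch : ch = fun _ => ch () := funext fun u => by cases u; rfl
  rw [tbullet, ← hch, ← h, PFunctor.M.mk_dest]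

lemma eq_tarrow_of_dest {t : PseudoType} {ch} (h : t.dest = ⟨TyHead.arrow, ch⟩) :
    t = tarrow (ch false) (ch true) := by
  have hch : ch = fun x => bif x then ch true else ch false := funext fun u => by cases u <;> rfl
  rw [← PFunctor.M.mk_dest t, h, hch]; rfl

lemma eq_tprod_of_dest {t : PseudoType} {ch} (h : t.dest = ⟨TyHead.prod, ch⟩) :
    t = tprod (ch false) (ch true) := by
  have hch : ch = fun x => bif x then ch true else ch false := funext fun u => by cases u <;> rfl
  rw [← PFunctor.M.mk_dest t, h, hch]; rfl

lemma eq_tnat_of_dest {t : PseudoType} {ch} (h : t.dest = ⟨TyHead.nat, ch⟩) :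
    t = tnat := by
  have hch : ch = Empty.elim := funext fun u => u.elim
  rw [tnat, ← hch, ← h, PFunctor.M.mk_dest]

lemma eq_tvar_of_dest {t : PseudoType} {n ch} (h : t.dest = ⟨TyHead.var n, ch⟩) :
    t = tvar n := by
  have hch : ch = Empty.elim := funext fun u => u.elim
  rw [tvar, ← hch, ← h, PFunctor.M.mk_dest]

/-- Case analysis on the root of a pseudo-type. -/
lemma pt_cases (t : PseudoType) :
    (∃ u, t = tbullet u) ∨ (∃ a b, t = tarrow a b) ∨ (∃ a b, t = tprod a b) ∨
      t = tnat ∨ (∃ n, t = tvar n) := by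
  rcases hd : t.dest with ⟨a, ch⟩
  cases a with
  | bullet => exact Or.inl ⟨ch (), eq_tbullet_of_dest hd⟩
  | arrow => exact Or.inr (Or.inl ⟨ch false, ch true, eq_tarrow_of_dest hd⟩)
  | prod => exact Or.inr (Or.inr (Or.inl ⟨ch false, ch true, eq_tprod_of_dest hd⟩))
  | nat => exact Or.inr (Or.inr (Or.inr (Or.inl (eq_tnat_of_dest hd))))
  | var n => exact Or.inr (Or.inr (Or.inr (Or.inr ⟨n, eq_tvar_of_dest hd⟩)))

lemma child_tbullet {t s : PseudoType} : Child (tbullet t) s ↔ s = t := by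
  constructor
  · rw [Child, dest_tbullet]; rintro ⟨b, rfl⟩; rfl
  · rintro rfl; rw [Child, dest_tbullet]; exact ⟨(), rfl⟩

lemma child_tarrow {a b s : PseudoType} : Child (tarrow a b) s ↔ s = a ∨ s = b := by
  constructor
  · rw [Child, dest_tarrow]; rintro ⟨x, rfl⟩; cases x
    · exact Or.inl rfl
    · exact Or.inr rfl
  · rintro (rfl | rfl)
    · rw [Child, dest_tarrow]; exact ⟨false, rfl⟩
    · rw [Child, dest_tarrow]; exact ⟨true, rfl⟩

lemma child_tprod {a b s : PseudoType} : Child (tprod a b) s ↔ s = a ∨ s = b := by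
  constructor
  · rw [Child, dest_tprod]; rintro ⟨x, rfl⟩; cases x
    · exact Or.inl rfl
    · exact Or.inr rfl
  · rintro (rfl | rfl)
    · rw [Child, dest_tprod]; exact ⟨false, rfl⟩
    · rw [Child, dest_tprod]; exact ⟨true, rfl⟩

lemma child_tnat {s : PseudoType} : ¬ Child tnat s := by
  rw [Child, dest_tnat]; rintro ⟨x, -⟩; exact x.elim

lemma child_tvar {n} {s : PseudoType} : ¬ Child (tvar n) s := by
  rw [Child, dest_tvar]; rintro ⟨x, -⟩; exact x.elim

/-! ### binf -/

lemma dest_binf : binf.dest = ⟨TyHead.bullet, fun _ => binf⟩ := by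
  rw [binf]; exact M.dest_corec _ _

lemma tbullet_binf : tbullet binf = binf := (eq_tbullet_of_dest dest_binf).symm

lemma binf_of_tbullet {t : PseudoType} (h : tbullet t = binf) : t = binf := by
  have h2 := congrArg PFunctor.M.dest h
  rw [dest_tbullet, dest_binf] at h2
  have h3 := (Sigma.mk.inj_iff.mp h2).2
  exact congrFun (eq_of_heq h3) ()

lemma thead_binf : thead binf = TyHead.bullet := by rw [thead, dest_binf]

lemma ne_binf_of_thead {t : PseudoType} (h : thead t ≠ TyHead.bullet) : t ≠ binf := by
  intro he; rw [he, thead_binf] at h; exact h rfl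

/-! ### tbulletN -/

lemma tbulletN_zero (t : PseudoType) : tbulletN 0 t = t := rfl
lemma tbulletN_succ (n : ℕ) (t : PseudoType) :
    tbulletN (n + 1) t = tbullet (tbulletN n t) := Function.iterate_succ_apply' _ _ _
lemma tbulletN_succ' (n : ℕ) (t : PseudoType) :
    tbulletN (n + 1) t = tbulletN n (tbullet t) := Function.iterate_succ_apply _ _ _
lemma tbulletN_add (m n : ℕ) (t : PseudoType) :
    tbulletN (m + n) t = tbulletN m (tbulletN n t) := by
  exact Function.iterate_add_apply _ _ _ _
lemma tbullet_tbulletN (n : ℕ) (t : PseudoType) :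
    tbullet (tbulletN n t) = tbulletN n (tbullet t) := by
  rw [← tbulletN_succ, tbulletN_succ']

lemma bulletN_inj {u v : PseudoType} (hu : thead u ≠ TyHead.bullet)
    (hv : thead v ≠ TyHead.bullet) :
    ∀ {n m : ℕ}, tbulletN n u = tbulletN m v → n = m ∧ u = v := by
  intro n
  induction n with
  | zero =>
    intro m h
    cases m with
    | zero => exact ⟨rfl, h⟩
    | succ m =>
      exfalso; rw [tbulletN_zero, tbulletN_succ] at h
      rw [h, thead_tbullet] at hu; exact hu rfl
  | succ n ih =>
    intro m h
    cases m with
    | zero =>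
      exfalso; rw [tbulletN_zero, tbulletN_succ] at h
      rw [← h, thead_tbullet] at hv; exact hv rfl
    | succ m =>
      rw [tbulletN_succ, tbulletN_succ] at h
      obtain ⟨h1, h2⟩ := ih (tbullet_inj h)
      exact ⟨by omega, h2⟩

lemma thead_tbulletN_ne {n : ℕ} {u : PseudoType} (hu : thead u ≠ TyHead.bullet)
    (hb : thead (tbulletN n u) ≠ TyHead.bullet) : n = 0 := by
  cases n with
  | zero => rfl
  | succ n => rw [tbulletN_succ, thead_tbullet] at hb; exact absurd rfl hb

/-! ### Subtree -/

lemma subtree_refl (t : PseudoType) : Subtree t t := ReflTransGen.refl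
lemma subtree_of_child {t s : PseudoType} (h : Child t s) : Subtree t s :=
  ReflTransGen.single h
lemma subtree_trans {a b c : PseudoType} (h1 : Subtree a b) (h2 : Subtree b c) :
    Subtree a c := ReflTransGen.trans h1 h2

/-! ### BinfFree -/

lemma bf_not_binf {t : PseudoType} (h : BinfFree t) : t ≠ binf := h t (subtree_refl t)

lemma bf_subtree {t s : PseudoType} (h : BinfFree t) (hs : Subtree t s) : BinfFree s :=
  fun u hu => h u (subtree_trans hs hu)

lemma bf_child {t s : PseudoType} (h : BinfFree t) (hs : Child t s) : BinfFree s :=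
  bf_subtree h (subtree_of_child hs)

lemma subtree_tbullet {t s : PseudoType} (h : Subtree (tbullet t) s) :
    s = tbullet t ∨ Subtree t s := by
  rcases ReflTransGen.cases_head h with h | ⟨c, hc, hcs⟩
  · exact Or.inl h.symm
  · rw [child_tbullet] at hc; subst hc; exact Or.inr hcs

lemma bf_tbullet {t : PseudoType} (h : BinfFree t) : BinfFree (tbullet t) := by
  intro s hs hbinf
  rcases subtree_tbullet hs with rfl | hsub
  · exact bf_not_binf h (binf_of_tbullet hbinf)
  · exact h s hsub hbinf

lemma bf_of_tbullet {t : PseudoType} (h : BinfFree (tbullet t)) : BinfFree t :=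
  bf_child h (child_tbullet.mpr rfl)

lemma bf_tbulletN {n : ℕ} {t : PseudoType} (h : BinfFree t) : BinfFree (tbulletN n t) := by
  induction n with
  | zero => exact h
  | succ n ih => rw [tbulletN_succ]; exact bf_tbullet ih

lemma bf_of_tbulletN {n : ℕ} {t : PseudoType} (h : BinfFree (tbulletN n t)) : BinfFree t := by
  induction n with
  | zero => exact h
  | succ n ih => rw [tbulletN_succ] at h; exact ih (bf_of_tbullet h)

lemma bf_tarrow_left {a b : PseudoType} (h : BinfFree (tarrow a b)) : BinfFree a :=
  bf_child h (child_tarrow.mpr (Or.inl rfl))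
lemma bf_tarrow_right {a b : PseudoType} (h : BinfFree (tarrow a b)) : BinfFree b :=
  bf_child h (child_tarrow.mpr (Or.inr rfl))
lemma bf_tprod_left {a b : PseudoType} (h : BinfFree (tprod a b)) : BinfFree a :=
  bf_child h (child_tprod.mpr (Or.inl rfl))
lemma bf_tprod_right {a b : PseudoType} (h : BinfFree (tprod a b)) : BinfFree b :=
  bf_child h (child_tprod.mpr (Or.inr rfl))

lemma bf_tnat : BinfFree tnat := by
  intro s hs
  rcases ReflTransGen.cases_head hs with rfl | ⟨c, hc, -⟩
  · exact ne_binf_of_thead (by rw [thead_tnat]; exact fun h => TyHead.noConfusion h)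
  · exact absurd hc child_tnat

lemma bf_tvar (n : ℕ) : BinfFree (tvar n) := by
  intro s hs
  rcases ReflTransGen.cases_head hs with rfl | ⟨c, hc, -⟩
  · exact ne_binf_of_thead (by rw [thead_tvar]; exact fun h => TyHead.noConfusion h)
  · exact absurd hc child_tvar

/-- Stripping bullets from a binf-free type terminates. -/
lemma bf_strip {t : PseudoType} (h : BinfFree t) :
    ∃ n u, t = tbulletN n u ∧ thead u ≠ TyHead.bullet := by
  by_contra hc
  push_neg at hc
  have key : ∀ n u, t = tbulletN n u → thead u = TyHead.bullet := hc
  have : t = binf := by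
    apply M.bisim (fun x y => y = binf ∧ ∀ n u, x = tbulletN n u → thead u = TyHead.bullet)
    · rintro x y ⟨rfl, hx⟩
      have hxb : thead x = TyHead.bullet := hx 0 x rfl
      rcases hd : x.dest with ⟨a, ch⟩
      have ha : a = TyHead.bullet := by rw [thead, hd] at hxb; exact hxb
      subst ha
      refine ⟨TyHead.bullet, ch, fun _ => binf, rfl, dest_binf, ?_⟩
      intro i
      refine ⟨rfl, ?_⟩
      intro n u he
      have hx2 : x = tbullet (ch ()) := eq_tbullet_of_dest hd
      have : ch i = ch () := by cases i; rfl
      rw [this] at he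
      exact hx n.succ u (by rw [hx2, he, tbulletN_succ])
    · exact ⟨rfl, key⟩
  exact bf_not_binf h this

/-! ### Guarded / Regular / IsType -/

lemma guarded_child {t s : PseudoType} (h : Guarded t) (hc : Child t s) : Guarded s := by
  intro f hf0 hstep N
  have hgstep : ∀ n, Child ((fun n => Nat.casesOn n t f) n) ((fun n => Nat.casesOn n t f) (n+1)) := by
    intro n; cases n with
    | zero => show Child t (f 0); rw [hf0]; exact hc
    | succ n => exact hstep n
  obtain ⟨n, hn, hb⟩ := h (fun n => Nat.casesOn n t f) rfl hgstep (N+1)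
  cases n with
  | zero => omega
  | succ m => exact ⟨m, by omega, hb⟩

lemma guarded_tbullet {t : PseudoType} (h : Guarded t) : Guarded (tbullet t) := by
  intro f hf0 hstep N
  cases N with
  | zero => exact ⟨0, le_refl 0, by rw [hf0]; exact thead_tbullet t⟩
  | succ N =>
    have hf1 : f 1 = t := by
      have h0 := hstep 0; rw [hf0] at h0; exact child_tbullet.mp h0
    obtain ⟨n, hn, hb⟩ := h (fun n => f (n+1)) hf1 (fun n => hstep (n+1)) N
    exact ⟨n+1, by omega, hb⟩

lemma guarded_of_tbullet {t : PseudoType} (h : Guarded (tbullet t)) : Guarded t :=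
  guarded_child h (child_tbullet.mpr rfl)

lemma guarded_tbulletN {n : ℕ} {t : PseudoType} (h : Guarded t) : Guarded (tbulletN n t) := by
  induction n with
  | zero => exact h
  | succ n ih => rw [tbulletN_succ]; exact guarded_tbullet ih

lemma guarded_of_tbulletN {n : ℕ} {t : PseudoType} (h : Guarded (tbulletN n t)) : Guarded t := by
  induction n with
  | zero => exact h
  | succ n ih => rw [tbulletN_succ] at h; exact ih (guarded_of_tbullet h)

lemma guarded_tarrow {a b : PseudoType} (ha : Guarded a) (hb : Guarded b) :
    Guarded (tarrow a b) := by
  intro f hf0 hstep N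
  have h0 := hstep 0; rw [hf0] at h0
  have hf1 : Guarded (f 1) := by
    rcases child_tarrow.mp h0 with h | h
    · rw [h]; exact ha
    · rw [h]; exact hb
  obtain ⟨n, hn, hbb⟩ := hf1 (fun n => f (n+1)) rfl (fun n => hstep (n+1)) N
  exact ⟨n+1, by omega, hbb⟩

lemma guarded_tprod {a b : PseudoType} (ha : Guarded a) (hb : Guarded b) :
    Guarded (tprod a b) := by
  intro f hf0 hstep N
  have h0 := hstep 0; rw [hf0] at h0
  have hf1 : Guarded (f 1) := by
    rcases child_tprod.mp h0 with h | h
    · rw [h]; exact ha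
    · rw [h]; exact hb
  obtain ⟨n, hn, hbb⟩ := hf1 (fun n => f (n+1)) rfl (fun n => hstep (n+1)) N
  exact ⟨n+1, by omega, hbb⟩

lemma guarded_tnat : Guarded tnat := by
  intro f hf0 hstep N
  have h0 := hstep 0; rw [hf0] at h0
  exact absurd h0 child_tnat

lemma guarded_tvar (n : ℕ) : Guarded (tvar n) := by
  intro f hf0 hstep N
  have h0 := hstep 0; rw [hf0] at h0
  exact absurd h0 child_tvar

lemma regular_tbullet {t : PseudoType} (h : Regular t) : Regular (tbullet t) := by
  apply Set.Finite.subset (h.insert (tbullet t))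
  intro s hs
  rcases subtree_tbullet hs with rfl | hsub
  · exact Set.mem_insert _ _
  · exact Set.mem_insert_of_mem _ hsub

lemma regular_of_tbullet {t : PseudoType} (h : Regular (tbullet t)) : Regular t := by
  apply Set.Finite.subset h
  intro s hs
  exact ReflTransGen.head (child_tbullet.mpr rfl) hs

lemma isType_tbullet {t : PseudoType} (h : IsType t) : IsType (tbullet t) :=
  ⟨regular_tbullet h.1, guarded_tbullet h.2⟩

lemma isType_of_tbullet {t : PseudoType} (h : IsType (tbullet t)) : IsType t :=
  ⟨regular_of_tbullet h.1, guarded_of_tbullet h.2⟩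

lemma kappa_guarded {c : Const} {u : PseudoType} (h : KappaTy c u) : Guarded u := by
  cases h with
  | pair ht hs => exact guarded_tarrow ht.2 (guarded_tarrow hs.2 (guarded_tprod ht.2 hs.2))
  | fst ht hs => exact guarded_tarrow (guarded_tprod ht.2 hs.2) ht.2
  | snd ht hs => exact guarded_tarrow (guarded_tprod ht.2 hs.2) hs.2
  | zero => exact guarded_tnat
  | succ => exact guarded_tarrow guarded_tnat guarded_tnat

/-! ### substitution algebra -/

lemma liftRen_comp (f g : ℕ → ℕ) : liftRen (f ∘ g) = liftRen f ∘ liftRen g :=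
  funext fun n => by cases n <;> rfl

lemma rename_rename (f g : ℕ → ℕ) (e : Expr) :
    rename f (rename g e) = rename (f ∘ g) e := by
  induction e generalizing f g with
  | var x => rfl
  | const k => rfl
  | lam e ih => simp [rename, liftRen_comp, ih]
  | app a b iha ihb => simp [rename, iha, ihb]

lemma liftSub_liftRen (σ : ℕ → Expr) (f : ℕ → ℕ) :
    (fun n => liftSub σ (liftRen f n)) = liftSub (fun n => σ (f n)) :=
  funext fun n => by cases n <;> rfl

lemma subst_rename (σ : ℕ → Expr) (f : ℕ → ℕ) (e : Expr) :
    substE σ (rename f e) = substE (fun n => σ (f n)) e := by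
  induction e generalizing σ f with
  | var x => rfl
  | const k => rfl
  | lam e ih => simp [rename, substE, ih, liftSub_liftRen]
  | app a b iha ihb => simp [rename, substE, iha, ihb]

lemma liftRen_liftSub (f : ℕ → ℕ) (σ : ℕ → Expr) :
    (fun n => rename (liftRen f) (liftSub σ n)) = liftSub (fun n => rename f (σ n)) := by
  funext n
  cases n with
  | zero => rfl
  | succ n =>
    show rename (liftRen f) (rename Nat.succ (σ n)) = rename Nat.succ (rename f (σ n))
    rw [rename_rename, rename_rename]
    rfl

lemma rename_subst (f : ℕ → ℕ) (σ : ℕ → Expr) (e : Expr) :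
    rename f (substE σ e) = substE (fun n => rename f (σ n)) e := by
  induction e generalizing σ f with
  | var x => rfl
  | const k => rfl
  | lam e ih => simp [rename, substE, ih, liftRen_liftSub]
  | app a b iha ihb => simp [rename, substE, iha, ihb]

lemma liftSub_liftSub (σ τ : ℕ → Expr) :
    (fun n => substE (liftSub σ) (liftSub τ n)) = liftSub (fun n => substE σ (τ n)) := by
  funext n
  cases n with
  | zero => rfl
  | succ n =>
    show substE (liftSub σ) (rename Nat.succ (τ n)) = rename Nat.succ (substE σ (τ n))
    rw [subst_rename, rename_subst]
    rfl

lemma subst_subst (σ τ : ℕ → Expr) (e : Expr) :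
    substE σ (substE τ e) = substE (fun n => substE σ (τ n)) e := by
  induction e generalizing σ τ with
  | var x => rfl
  | const k => rfl
  | lam e ih => simp [substE, ih, liftSub_liftSub]
  | app a b iha ihb => simp [substE, iha, ihb]

lemma liftSub_var : liftSub Expr.var = Expr.var := funext fun n => by cases n <;> rfl

lemma substE_var (e : Expr) : substE Expr.var e = e := by
  induction e with
  | var x => rfl
  | const k => rfl
  | lam e ih => simp [substE, liftSub_var, ih]
  | app a b iha ihb => simp [substE, iha, ihb]

/-- extension of a substitution -/
def sub1 (f : Expr) (σ : ℕ → Expr) : ℕ → Expr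
  | 0 => f
  | n + 1 => σ n

lemma subst0_substE (σ : ℕ → Expr) (e f : Expr) :
    subst0 (substE (liftSub σ) e) f = substE (sub1 f σ) e := by
  rw [subst0, subst_subst]
  congr 1
  funext n
  cases n with
  | zero => rfl
  | succ n =>
    show substE _ (rename Nat.succ (σ n)) = σ n
    rw [subst_rename]
    exact substE_var (σ n)

/-! ### Reduction -/

def ECtx.comp : ECtx → ECtx → ECtx
  | .hole, F => F
  | .app E e, F => .app (E.comp F) e
  | .fst E, F => .fst (E.comp F)
  | .snd E, F => .snd (E.comp F)
  | .succ E, F => .succ (E.comp F)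

lemma plug_comp (E F : ECtx) (e : Expr) : (E.comp F).plug e = E.plug (F.plug e) := by
  induction E with
  | hole => rfl
  | app E f ih => simp [ECtx.comp, ECtx.plug, ih]
  | fst E ih => simp [ECtx.comp, ECtx.plug, ih]
  | snd E ih => simp [ECtx.comp, ECtx.plug, ih]
  | succ E ih => simp [ECtx.comp, ECtx.plug, ih]

lemma red_ctx {a b : Expr} (E : ECtx) (h : Red a b) : Red (E.plug a) (E.plug b) := by
  obtain ⟨F, u, v, hr, rfl, rfl⟩ := h
  exact ⟨E.comp F, u, v, hr, by rw [plug_comp], by rw [plug_comp]⟩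

lemma red_app_left {u u' v : Expr} (h : Red u u') : Red (.app u v) (.app u' v) :=
  red_ctx (.app .hole v) h
lemma red_fst_arg {v v' : Expr} (h : Red v v') :
    Red (.app (.const .cfst) v) (.app (.const .cfst) v') := red_ctx (.fst .hole) h
lemma red_snd_arg {v v' : Expr} (h : Red v v') :
    Red (.app (.const .csnd) v) (.app (.const .csnd) v') := red_ctx (.snd .hole) h
lemma red_succ_arg {v v' : Expr} (h : Red v v') :
    Red (.app (.const .succ) v) (.app (.const .succ) v') := red_ctx (.succ .hole) h

lemma redstar_ctx {a b : Expr} (E : ECtx) (h : RedStar a b) :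
    RedStar (E.plug a) (E.plug b) := by
  induction h with
  | refl => exact ReflTransGen.refl
  | tail _ hst ih => exact ReflTransGen.tail ih (red_ctx E hst)

lemma redstar_app_left {u u' v : Expr} (h : RedStar u u') :
    RedStar (.app u v) (.app u' v) := redstar_ctx (.app .hole v) h
lemma redstar_succ_arg {v v' : Expr} (h : RedStar v v') :
    RedStar (.app (.const .succ) v) (.app (.const .succ) v') := redstar_ctx (.succ .hole) h

/-- reduction from a non-application is impossible -/
lemma red_needs_app {e w : Expr} (h : Red e w) (hne : ∀ a b, e ≠ .app a b) : False := by
  obtain ⟨E, a, b, hr, he, -⟩ := h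
  cases E with
  | hole =>
    cases hr with
    | beta e' f => exact hne _ _ he
    | fst e₁ e₂ => exact hne _ _ he
    | snd e₁ e₂ => exact hne _ _ he
  | app E f => exact hne _ _ he
  | fst E => exact hne _ _ he
  | snd E => exact hne _ _ he
  | succ E => exact hne _ _ he

lemma nf_var (x : ℕ) : NormalForm (.var x) :=
  fun _ h => red_needs_app h (fun _ _ h' => Expr.noConfusion h')
lemma nf_const (k : Const) : NormalForm (.const k) :=
  fun _ h => red_needs_app h (fun _ _ h' => Expr.noConfusion h')
lemma nf_lam (e : Expr) : NormalForm (.lam e) :=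
  fun _ h => red_needs_app h (fun _ _ h' => Expr.noConfusion h')

/-- Inversion for reduction of an application. -/
lemma red_app_inv {u v w : Expr} (h : Red (.app u v) w) :
    (∃ u', Red u u' ∧ w = .app u' v) ∨
    (∃ b, u = .lam b ∧ w = subst0 b v) ∨
    (u = .const .cfst ∧ ((∃ a b, v = mkPair a b ∧ w = a) ∨ (∃ v', Red v v' ∧ w = .app u v'))) ∨
    (u = .const .csnd ∧ ((∃ a b, v = mkPair a b ∧ w = b) ∨ (∃ v', Red v v' ∧ w = .app u v'))) ∨
    (u = .const .succ ∧ (∃ v', Red v v' ∧ w = .app u v')) := by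
  obtain ⟨E, a, b, hr, he, rfl⟩ := h
  cases E with
  | hole =>
    cases hr with
    | beta e' f =>
      obtain ⟨h1, h2⟩ := Expr.app.inj he
      exact Or.inr (Or.inl ⟨e', h1, by rw [h2]; rfl⟩)
    | fst p q =>
      obtain ⟨h1, h2⟩ := Expr.app.inj he
      exact Or.inr (Or.inr (Or.inl ⟨h1, Or.inl ⟨_, q, h2, rfl⟩⟩))
    | snd p q =>
      obtain ⟨h1, h2⟩ := Expr.app.inj he
      exact Or.inr (Or.inr (Or.inr (Or.inl ⟨h1, Or.inl ⟨p, _, h2, rfl⟩⟩)))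
  | app E f =>
    obtain ⟨h1, h2⟩ := Expr.app.inj he
    subst h2
    exact Or.inl ⟨E.plug b, ⟨E, a, b, hr, h1, rfl⟩, rfl⟩
  | fst E =>
    obtain ⟨h1, h2⟩ := Expr.app.inj he
    subst h1
    exact Or.inr (Or.inr (Or.inl ⟨rfl, Or.inr ⟨E.plug b, ⟨E, a, b, hr, h2, rfl⟩, rfl⟩⟩))
  | snd E =>
    obtain ⟨h1, h2⟩ := Expr.app.inj he
    subst h1
    exact Or.inr (Or.inr (Or.inr (Or.inl ⟨rfl, Or.inr ⟨E.plug b, ⟨E, a, b, hr, h2, rfl⟩, rfl⟩⟩)))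
  | succ E =>
    obtain ⟨h1, h2⟩ := Expr.app.inj he
    subst h1
    exact Or.inr (Or.inr (Or.inr (Or.inr ⟨rfl, ⟨E.plug b, ⟨E, a, b, hr, h2, rfl⟩, rfl⟩⟩)))

/-! ### Stuck terms -/

inductive Stuck : Expr → Prop
  | var (x : ℕ) : Stuck (.var x)
  | app {e : Expr} (f : Expr) : Stuck e → Stuck (.app e f)
  | pfst {e : Expr} : Stuck e → Stuck (.app (.const .cfst) e)
  | psnd {e : Expr} : Stuck e → Stuck (.app (.const .csnd) e)

lemma stuck_not_lam {b : Expr} (h : Stuck (.lam b)) : False := by cases h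
lemma stuck_not_const {k : Const} (h : Stuck (.const k)) : False := by cases h

lemma stuck_not_mkPair {a b : Expr} (h : Stuck (mkPair a b)) : False := by
  rw [mkPair] at h
  cases h with
  | app _ h2 =>
    cases h2 with
    | app _ h3 => exact stuck_not_const h3

lemma stuck_nf {e : Expr} (h : Stuck e) : NormalForm e := by
  induction h with
  | var x => exact nf_var x
  | app f hs ih =>
    intro w hw
    rcases red_app_inv hw with ⟨u', hu', -⟩ | ⟨b, rfl, -⟩ | ⟨rfl, -⟩ | ⟨rfl, -⟩ | ⟨rfl, -⟩
    · exact ih _ hu'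
    · exact stuck_not_lam hs
    · exact stuck_not_const hs
    · exact stuck_not_const hs
    · exact stuck_not_const hs
  | pfst hs ih =>
    intro w hw
    rcases red_app_inv hw with ⟨u', hu', -⟩ | ⟨b, hb, -⟩ | ⟨-, ⟨a, b, hv, -⟩ | ⟨v', hv', -⟩⟩ |
        ⟨hcc, -⟩ | ⟨hcc, -⟩
    · exact nf_const _ _ hu'
    · exact Expr.noConfusion hb
    · rw [hv] at hs; exact stuck_not_mkPair hs
    · exact ih _ hv'
    · exact Const.noConfusion (Expr.const.inj hcc)
    · exact Const.noConfusion (Expr.const.inj hcc)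
  | psnd hs ih =>
    intro w hw
    rcases red_app_inv hw with ⟨u', hu', -⟩ | ⟨b, hb, -⟩ | ⟨hcc, -⟩ |
        ⟨-, ⟨a, b, hv, -⟩ | ⟨v', hv', -⟩⟩ | ⟨hcc, -⟩
    · exact nf_const _ _ hu'
    · exact Expr.noConfusion hb
    · exact Const.noConfusion (Expr.const.inj hcc)
    · rw [hv] at hs; exact stuck_not_mkPair hs
    · exact ih _ hv'
    · exact Const.noConfusion (Expr.const.inj hcc)

/-! ### whnf lemmas -/

lemma whnf_of_nf {e : Expr} (h : NormalForm e) : HasWhnf e := ⟨e, ReflTransGen.refl, h⟩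

lemma whnf_expand {e e' : Expr} (h : Red e e') (hw : HasWhnf e') : HasWhnf e := by
  obtain ⟨w, hs, hn⟩ := hw
  exact ⟨w, ReflTransGen.head h hs, hn⟩

lemma nf_succ_arg {v : Expr} (h : NormalForm v) : NormalForm (.app (.const .succ) v) := by
  intro w hw
  rcases red_app_inv hw with ⟨u', hu', -⟩ | ⟨b, hb, -⟩ | ⟨hcc, -⟩ | ⟨hcc, -⟩ | ⟨-, v', hv', -⟩
  · exact nf_const _ _ hu'
  · exact Expr.noConfusion hb
  · exact Const.noConfusion (Expr.const.inj hcc)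
  · exact Const.noConfusion (Expr.const.inj hcc)
  · exact h _ hv'

lemma whnf_succ {v : Expr} (h : HasWhnf v) : HasWhnf (.app (.const .succ) v) := by
  obtain ⟨w, hs, hn⟩ := h
  exact ⟨.app (.const .succ) w, redstar_succ_arg hs, nf_succ_arg hn⟩

lemma nf_pair_partial (a : Expr) : NormalForm (.app (.const .pair) a) := by
  intro w hw
  rcases red_app_inv hw with ⟨u', hu', -⟩ | ⟨b, hb, -⟩ | ⟨hcc, -⟩ | ⟨hcc, -⟩ | ⟨hcc, -⟩
  · exact nf_const _ _ hu'
  · exact Expr.noConfusion hb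
  · exact Const.noConfusion (Expr.const.inj hcc)
  · exact Const.noConfusion (Expr.const.inj hcc)
  · exact Const.noConfusion (Expr.const.inj hcc)

lemma nf_mkPair (a b : Expr) : NormalForm (mkPair a b) := by
  intro w hw
  rcases red_app_inv hw with ⟨u', hu', -⟩ | ⟨b', hb, -⟩ | ⟨hcc, -⟩ | ⟨hcc, -⟩ | ⟨hcc, -⟩
  · exact nf_pair_partial _ _ hu'
  · exact Expr.noConfusion hb
  · exact Expr.noConfusion hcc
  · exact Expr.noConfusion hcc
  · exact Expr.noConfusion hcc

lemma red_fst_pair (a b : Expr) : Red (.app (.const .cfst) (mkPair a b)) a :=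
  ⟨.hole, _, _, HeadRed.fst a b, rfl, rfl⟩
lemma red_snd_pair (a b : Expr) : Red (.app (.const .csnd) (mkPair a b)) b :=
  ⟨.hole, _, _, HeadRed.snd a b, rfl, rfl⟩
lemma red_beta (e f : Expr) : Red (.app (.lam e) f) (subst0 e f) :=
  ⟨.hole, _, _, HeadRed.beta e f, rfl, rfl⟩

/-! ### spines -/

lemma spineApp_nil (h : Expr) : spineApp h [] = h := rfl
lemma spineApp_cons (h a : Expr) (l : List Expr) :
    spineApp h (a :: l) = spineApp (.app h a) l := rfl
lemma spineApp_append (h a : Expr) (l : List Expr) :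
    spineApp h (l ++ [a]) = .app (spineApp h l) a := by
  simp [spineApp]

lemma stuck_spine {h : Expr} (hs : Stuck h) (l : List Expr) : Stuck (spineApp h l) := by
  induction l generalizing h with
  | nil => exact hs
  | cons a l ih => exact ih (Stuck.app a hs)

lemma red_spine {h h' : Expr} (hr : Red h h') (l : List Expr) :
    Red (spineApp h l) (spineApp h' l) := by
  induction l generalizing h h' with
  | nil => exact hr
  | cons a l ih => exact ih (red_app_left hr)

lemma nf_spine_head {h : Expr} {l : List Expr} (hn : NormalForm (spineApp h l)) :
    NormalForm h := fun w hw => hn _ (red_spine hw l)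

lemma nf_app_left {u v : Expr} (hn : NormalForm (.app u v)) : NormalForm u :=
  fun w hw => hn _ (red_app_left hw)
lemma nf_fst_arg' {v : Expr} (hn : NormalForm (.app (.const .cfst) v)) : NormalForm v :=
  fun w hw => hn _ (red_fst_arg hw)
lemma nf_snd_arg' {v : Expr} (hn : NormalForm (.app (.const .csnd) v)) : NormalForm v :=
  fun w hw => hn _ (red_snd_arg hw)

lemma redstar_nf {e w : Expr} (h : RedStar e w) (hn : NormalForm e) : w = e := by
  rcases ReflTransGen.cases_head h with h | ⟨c, hc, -⟩
  · exact h.symm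
  · exact absurd hc (hn c)

/-! ### Typing lemmas -/

lemma types_bulletN {Γ : Ctx} {e : Expr} {t : PseudoType} (m : ℕ) (h : Types Γ e t) :
    Types Γ e (tbulletN m t) := by
  induction m with
  | zero => exact h
  | succ m ih => rw [tbulletN_succ]; exact Types.bulletI ih

lemma inv_var {Γ : Ctx} {x : ℕ} {T : PseudoType} (h : Types Γ (.var x) T) :
    ∃ m u, Γ x = some u ∧ IsType u ∧ T = tbulletN m u := by
  generalize hE : Expr.var x = E at h
  induction h with
  | ax hx ht =>
    obtain rfl := (Expr.var.inj hE.symm)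
    exact ⟨0, _, hx, ht, rfl⟩
  | const hk => exact Expr.noConfusion hE
  | bulletI _ ih =>
    obtain ⟨m, u, h1, h2, rfl⟩ := ih hE
    exact ⟨m + 1, u, h1, h2, (tbulletN_succ m u).symm⟩
  | arrowI _ ih => exact Expr.noConfusion hE
  | arrowE _ _ ih1 ih2 => exact Expr.noConfusion hE

lemma inv_const {Γ : Ctx} {k : Const} {T : PseudoType} (h : Types Γ (.const k) T) :
    ∃ m u, KappaTy k u ∧ T = tbulletN m u := by
  generalize hE : Expr.const k = E at h
  induction h with
  | ax hx ht => exact Expr.noConfusion hE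
  | const hk =>
    obtain rfl := (Expr.const.inj hE.symm)
    exact ⟨0, _, hk, rfl⟩
  | bulletI _ ih =>
    obtain ⟨m, u, h1, rfl⟩ := ih hE
    exact ⟨m + 1, u, h1, (tbulletN_succ m u).symm⟩
  | arrowI _ ih => exact Expr.noConfusion hE
  | arrowE _ _ ih1 ih2 => exact Expr.noConfusion hE

lemma inv_app {Γ : Ctx} {u v : Expr} {T : PseudoType} (h : Types Γ (.app u v) T) :
    ∃ n a b, T = tbulletN n b ∧ Types Γ u (tbulletN n (tarrow a b)) ∧
      Types Γ v (tbulletN n a) := by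
  generalize hE : Expr.app u v = E at h
  induction h with
  | ax hx ht => exact Expr.noConfusion hE
  | const hk => exact Expr.noConfusion hE
  | bulletI _ ih =>
    obtain ⟨n, a, b, rfl, h1, h2⟩ := ih hE
    refine ⟨n + 1, a, b, (tbulletN_succ n b).symm, ?_, ?_⟩
    · rw [tbulletN_succ]; exact Types.bulletI h1
    · rw [tbulletN_succ]; exact Types.bulletI h2
  | arrowI _ ih => exact Expr.noConfusion hE
  | arrowE h1 h2 ih1 ih2 =>
    obtain ⟨rfl, rfl⟩ := Expr.app.inj hE.symm
    exact ⟨_, _, _, rfl, h1, h2⟩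

/-! ### context replacement -/

def CtxLe (Γ Δ : Ctx) : Prop := ∀ x u, Γ x = some u → IsType u → Types Δ (.var x) u

lemma ctxLe_cons {Γ Δ : Ctx} (h : CtxLe Γ Δ) (s : PseudoType) :
    CtxLe (Ctx.cons s Γ) (Ctx.cons s Δ) := by
  intro x u hx hu
  cases x with
  | zero =>
    obtain rfl := Option.some.inj hx
    exact Types.ax rfl hu
  | succ x =>
    obtain ⟨m, w, hw, hwt, rfl⟩ := inv_var (h x u hx hu)
    exact types_bulletN m (Types.ax (show Ctx.cons s Δ (x+1) = some w from hw) hwt)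

lemma types_ctxLe {Γ : Ctx} {e : Expr} {t : PseudoType} (h : Types Γ e t) :
    ∀ {Δ : Ctx}, CtxLe Γ Δ → Types Δ e t := by
  induction h with
  | ax hx ht => exact fun hle => hle _ _ hx ht
  | const hk => exact fun _ => Types.const hk
  | bulletI _ ih => exact fun hle => Types.bulletI (ih hle)
  | arrowI _ ih => exact fun hle => Types.arrowI (ih (ctxLe_cons hle _))
  | arrowE _ _ ih1 ih2 => exact fun hle => Types.arrowE (ih1 hle) (ih2 hle)

/-! ### delay -/

def bulletCtx (Γ : Ctx) : Ctx := fun x => (Γ x).map tbullet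

lemma bulletCtx_cons (u : PseudoType) (Γ : Ctx) :
    bulletCtx (Ctx.cons u Γ) = Ctx.cons (tbullet u) (bulletCtx Γ) :=
  funext fun x => by cases x <;> rfl

lemma types_delay {Γ : Ctx} {e : Expr} {t : PseudoType} (h : Types Γ e t) :
    Types (bulletCtx Γ) e (tbullet t) := by
  induction h with
  | ax hx ht =>
    exact Types.ax (show (_ : Option _).map tbullet = _ by rw [hx]; rfl) (isType_tbullet ht)
  | const hk => exact Types.bulletI (Types.const hk)
  | bulletI _ ih => exact Types.bulletI ih
  | @arrowI Γ e n t s _ ih =>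
    rw [bulletCtx_cons, ← tbulletN_succ, ← tbulletN_succ] at ih
    have h2 := Types.arrowI ih
    rw [tbulletN_succ] at h2
    exact h2
  | @arrowE Γ e₁ e₂ n t s _ _ ih1 ih2 =>
    rw [← tbulletN_succ] at ih1 ih2
    have h3 := Types.arrowE ih1 ih2
    rw [tbulletN_succ] at h3
    exact h3

lemma ctxLe_bulletCtx (Γ : Ctx) : CtxLe (bulletCtx Γ) Γ := by
  intro x u hx hu
  obtain ⟨w, hw, rfl⟩ : ∃ w, Γ x = some w ∧ u = tbullet w := by
    rcases hg : Γ x with _ | w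
    · rw [bulletCtx, hg] at hx; exact absurd hx.symm (Option.some_ne_none u)
    · rw [bulletCtx, hg] at hx; exact ⟨w, rfl, (Option.some.inj hx).symm⟩
  exact Types.bulletI (Types.ax hw (isType_of_tbullet hu))

lemma inv_lam {Γ : Ctx} {e : Expr} {T : PseudoType} (h : Types Γ (.lam e) T) :
    ∃ n a b, T = tbulletN n (tarrow a b) ∧
      Types (Ctx.cons (tbulletN n a) Γ) e (tbulletN n b) := by
  generalize hE : Expr.lam e = E at h
  induction h with
  | ax hx ht => exact Expr.noConfusion hE
  | const hk => exact Expr.noConfusion hE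
  | @bulletI Γ _ _ _ ih =>
    obtain ⟨n, a, b, rfl, hb⟩ := ih hE
    refine ⟨n + 1, a, b, (tbulletN_succ _ _).symm, ?_⟩
    have hd := types_delay hb
    rw [bulletCtx_cons, ← tbulletN_succ, ← tbulletN_succ] at hd
    exact types_ctxLe hd (ctxLe_cons (ctxLe_bulletCtx Γ) _)
  | arrowI hb ih =>
    obtain rfl := Expr.lam.inj hE.symm
    exact ⟨_, _, _, rfl, hb⟩
  | arrowE _ _ ih1 ih2 => exact Expr.noConfusion hE

/-! ### renaming and substitution preserve typing -/

lemma types_rename {Γ : Ctx} {e : Expr} {t : PseudoType} (h : Types Γ e t) :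
    ∀ {Δ : Ctx} {f : ℕ → ℕ}, (∀ x u, Γ x = some u → Δ (f x) = some u) →
      Types Δ (rename f e) t := by
  induction h with
  | ax hx ht => exact fun hf => Types.ax (hf _ _ hx) ht
  | const hk => exact fun _ => Types.const hk
  | bulletI _ ih => exact fun hf => Types.bulletI (ih hf)
  | @arrowI Γ e n t s _ ih =>
    intro Δ f hf
    apply Types.arrowI
    apply ih
    intro x u hx
    cases x with
    | zero => exact hx
    | succ x => exact hf x u hx
  | arrowE _ _ ih1 ih2 => exact fun hf => Types.arrowE (ih1 hf) (ih2 hf)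

lemma types_subst {Γ : Ctx} {e : Expr} {t : PseudoType} (h : Types Γ e t) :
    ∀ {Δ : Ctx} {σ : ℕ → Expr}, (∀ x u, Γ x = some u → IsType u → Types Δ (σ x) u) →
      Types Δ (substE σ e) t := by
  induction h with
  | ax hx ht => exact fun hσ => hσ _ _ hx ht
  | const hk => exact fun _ => Types.const hk
  | bulletI _ ih => exact fun hσ => Types.bulletI (ih hσ)
  | @arrowI Γ e n t s _ ih =>
    intro Δ σ hσ
    apply Types.arrowI
    apply ih
    intro x u hx hu
    cases x with
    | zero =>
      obtain rfl := Option.some.inj hx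
      exact Types.ax rfl hu
    | succ x =>
      have hty := hσ x u hx hu
      exact types_rename hty (fun y w hw => show Ctx.cons _ Δ (y+1) = some w from hw)
  | arrowE _ _ ih1 ih2 => exact fun hσ => Types.arrowE (ih1 hσ) (ih2 hσ)

lemma thead_tarrow_ne (a b : PseudoType) : thead (tarrow a b) ≠ TyHead.bullet := by
  rw [thead_tarrow]; exact fun hh => TyHead.noConfusion hh
lemma thead_tprod_ne (a b : PseudoType) : thead (tprod a b) ≠ TyHead.bullet := by
  rw [thead_tprod]; exact fun hh => TyHead.noConfusion hh
lemma thead_tnat_ne : thead tnat ≠ TyHead.bullet := by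
  rw [thead_tnat]; exact fun hh => TyHead.noConfusion hh

/-! ### inversion for pairs -/

lemma inv_mkPair {Γ : Ctx} {a b : Expr} {T : PseudoType} (h : Types Γ (mkPair a b) T) :
    ∃ n p q, T = tbulletN n (tprod p q) ∧ Types Γ a (tbulletN n p) ∧
      Types Γ b (tbulletN n q) := by
  obtain ⟨n, c, d, rfl, h1, h2⟩ := inv_app h
  obtain ⟨j, c1, d1, he1, h3, h4⟩ := inv_app h1
  obtain ⟨m, w, hk, he2⟩ := inv_const h3
  cases hk with
  | @pair p q hp hq =>
    obtain ⟨rfl, he3⟩ := bulletN_inj (thead_tarrow_ne _ _) (thead_tarrow_ne _ _) he2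
    obtain ⟨rfl, rfl⟩ := tarrow_inj he3
    obtain ⟨rfl, he4⟩ := bulletN_inj (thead_tarrow_ne _ _) (thead_tarrow_ne _ _) he1
    obtain ⟨rfl, rfl⟩ := tarrow_inj he4
    exact ⟨_, _, _, rfl, h4, h2⟩

/-! ### subject reduction -/

lemma head_sr {Γ : Ctx} {e e' : Expr} {T : PseudoType} (hr : HeadRed e e')
    (h : Types Γ e T) : Types Γ e' T := by
  cases hr with
  | beta body f =>
    obtain ⟨n, c, d, rfl, h1, h2⟩ := inv_app h
    obtain ⟨n', a', b', he1, hb⟩ := inv_lam h1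
    obtain ⟨rfl, he2⟩ := bulletN_inj (thead_tarrow_ne _ _) (thead_tarrow_ne _ _) he1.symm
    obtain ⟨rfl, rfl⟩ := tarrow_inj he2
    rw [show subst0 body f = substE (sub1 f Expr.var) body by rw [subst0]; rfl]
    apply types_subst hb
    intro x u hx hu
    cases x with
    | zero => obtain rfl := Option.some.inj hx; exact h2
    | succ x => exact Types.ax hx hu
  | fst p q =>
    obtain ⟨n, c, d, rfl, h1, h2⟩ := inv_app h
    obtain ⟨m, w, hk, he2⟩ := inv_const h1
    cases hk with
    | @fst x y hx hy =>
      obtain ⟨rfl, he3⟩ := bulletN_inj (thead_tarrow_ne _ _) (thead_tarrow_ne _ _) he2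
      obtain ⟨rfl, rfl⟩ := tarrow_inj he3
      obtain ⟨n2, p2, q2, he4, hp, hq⟩ := inv_mkPair h2
      obtain ⟨rfl, he5⟩ := bulletN_inj (thead_tprod_ne _ _) (thead_tprod_ne _ _) he4
      obtain ⟨rfl, rfl⟩ := tprod_inj he5
      exact hp
  | snd p q =>
    obtain ⟨n, c, d, rfl, h1, h2⟩ := inv_app h
    obtain ⟨m, w, hk, he2⟩ := inv_const h1
    cases hk with
    | @snd x y hx hy =>
      obtain ⟨rfl, he3⟩ := bulletN_inj (thead_tarrow_ne _ _) (thead_tarrow_ne _ _) he2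
      obtain ⟨rfl, rfl⟩ := tarrow_inj he3
      obtain ⟨n2, p2, q2, he4, hp, hq⟩ := inv_mkPair h2
      obtain ⟨rfl, he5⟩ := bulletN_inj (thead_tprod_ne _ _) (thead_tprod_ne _ _) he4
      obtain ⟨rfl, rfl⟩ := tprod_inj he5
      exact hq

lemma plug_sr {e e' : Expr} (E : ECtx) (hr : HeadRed e e') :
    ∀ {Γ : Ctx} {T : PseudoType}, Types Γ (E.plug e) T → Types Γ (E.plug e') T := by
  induction E with
  | hole => exact fun h => head_sr hr h
  | app E f ih =>
    intro Γ T h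
    obtain ⟨n, c, d, rfl, h1, h2⟩ := inv_app h
    exact Types.arrowE (ih h1) h2
  | fst E ih =>
    intro Γ T h
    obtain ⟨n, c, d, rfl, h1, h2⟩ := inv_app h
    exact Types.arrowE h1 (ih h2)
  | snd E ih =>
    intro Γ T h
    obtain ⟨n, c, d, rfl, h1, h2⟩ := inv_app h
    exact Types.arrowE h1 (ih h2)
  | succ E ih =>
    intro Γ T h
    obtain ⟨n, c, d, rfl, h1, h2⟩ := inv_app h
    exact Types.arrowE h1 (ih h2)

lemma red_sr {Γ : Ctx} {e e' : Expr} {T : PseudoType} (hr : Red e e')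
    (h : Types Γ e T) : Types Γ e' T := by
  obtain ⟨E, a, b, hhr, rfl, rfl⟩ := hr
  exact plug_sr E hhr h

lemma redstar_sr {Γ : Ctx} {e e' : Expr} {T : PseudoType} (hr : RedStar e e')
    (h : Types Γ e T) : Types Γ e' T := by
  induction hr with
  | refl => exact h
  | tail _ hst ih => exact red_sr hst ih

/-! ### child choosers -/
attribute [local instance] Classical.propDecidable

noncomputable def bch (t : PseudoType) : PseudoType :=
  if h : ∃ u, t = tbullet u then h.choose else t

lemma eq_tbullet_self {t : PseudoType} (h : thead t = TyHead.bullet) :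
    t = tbullet (bch t) := by
  have hex : ∃ u, t = tbullet u := by
    rcases hd : t.dest with ⟨a, ch⟩
    have ha : a = TyHead.bullet := by rw [thead, hd] at h; exact h
    subst ha; exact ⟨ch (), eq_tbullet_of_dest hd⟩
  rw [bch, dif_pos hex]; exact hex.choose_spec

lemma bch_tbullet (u : PseudoType) : bch (tbullet u) = u := by
  have h : ∃ w, tbullet u = tbullet w := ⟨u, rfl⟩
  rw [bch, dif_pos h]; exact (tbullet_inj h.choose_spec).symm

noncomputable def ach (t : PseudoType) : PseudoType × PseudoType :=
  if h : ∃ p : PseudoType × PseudoType, t = tarrow p.1 p.2 then h.choose else (t, t)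

lemma eq_tarrow_self {t : PseudoType} (h : thead t = TyHead.arrow) :
    t = tarrow (ach t).1 (ach t).2 := by
  have hex : ∃ p : PseudoType × PseudoType, t = tarrow p.1 p.2 := by
    rcases hd : t.dest with ⟨a, ch⟩
    have ha : a = TyHead.arrow := by rw [thead, hd] at h; exact h
    subst ha; exact ⟨(ch false, ch true), eq_tarrow_of_dest hd⟩
  rw [ach, dif_pos hex]; exact hex.choose_spec

lemma ach_tarrow (a b : PseudoType) : ach (tarrow a b) = (a, b) := by
  have h : ∃ p : PseudoType × PseudoType, tarrow a b = tarrow p.1 p.2 := ⟨(a, b), rfl⟩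
  rw [ach, dif_pos h]
  obtain ⟨h1, h2⟩ := tarrow_inj h.choose_spec
  exact Prod.ext h1.symm h2.symm

noncomputable def pch (t : PseudoType) : PseudoType × PseudoType :=
  if h : ∃ p : PseudoType × PseudoType, t = tprod p.1 p.2 then h.choose else (t, t)

lemma eq_tprod_self {t : PseudoType} (h : thead t = TyHead.prod) :
    t = tprod (pch t).1 (pch t).2 := by
  have hex : ∃ p : PseudoType × PseudoType, t = tprod p.1 p.2 := by
    rcases hd : t.dest with ⟨a, ch⟩
    have ha : a = TyHead.prod := by rw [thead, hd] at h; exact h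
    subst ha; exact ⟨(ch false, ch true), eq_tprod_of_dest hd⟩
  rw [pch, dif_pos hex]; exact hex.choose_spec

lemma pch_tprod (a b : PseudoType) : pch (tprod a b) = (a, b) := by
  have h : ∃ p : PseudoType × PseudoType, tprod a b = tprod p.1 p.2 := ⟨(a, b), rfl⟩
  rw [pch, dif_pos h]
  obtain ⟨h1, h2⟩ := tprod_inj h.choose_spec
  exact Prod.ext h1.symm h2.symm


lemma child_ach {t : PseudoType} (h : thead t = TyHead.arrow) :
    Child t (ach t).1 ∧ Child t (ach t).2 := by
  have hd : t.dest = ⟨TyHead.arrow, fun x => bif x then (ach t).2 else (ach t).1⟩ := by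
    conv_lhs => rw [eq_tarrow_self h]
    exact dest_tarrow _ _
  constructor
  · rw [Child, hd]; exact ⟨false, rfl⟩
  · rw [Child, hd]; exact ⟨true, rfl⟩

lemma child_pch {t : PseudoType} (h : thead t = TyHead.prod) :
    Child t (pch t).1 ∧ Child t (pch t).2 := by
  have hd : t.dest = ⟨TyHead.prod, fun x => bif x then (pch t).2 else (pch t).1⟩ := by
    conv_lhs => rw [eq_tprod_self h]
    exact dest_tprod _ _
  constructor
  · rw [Child, hd]; exact ⟨false, rfl⟩
  · rw [Child, hd]; exact ⟨true, rfl⟩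

/-! ### the well-founded relation on guarded types -/

abbrev GT : Type := {t : PseudoType // Guarded t}

def bfRel (s t : GT) : Prop := Child t.1 s.1 ∧ thead t.1 ≠ TyHead.bullet

lemma bfRel_wf : WellFounded bfRel := by
  constructor
  intro a
  by_contra hna
  have step : ∀ x : GT, ¬ Acc bfRel x → ∃ y : GT, bfRel y x ∧ ¬ Acc bfRel y := by
    intro x hx
    by_contra hy
    push_neg at hy
    exact hx (Acc.intro x fun y hyx => by
      by_contra hny
      exact hny (hy y hyx))
  let f : ℕ → {x : GT // ¬ Acc bfRel x} := fun n =>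
    Nat.rec ⟨a, hna⟩ (fun _ p => ⟨(step p.1 p.2).choose, (step p.1 p.2).choose_spec.2⟩) n
  have hf : ∀ n, bfRel (f (n+1)).1 (f n).1 := fun n => (step (f n).1 (f n).2).choose_spec.1
  have hguard := (f 0).1.2
  obtain ⟨n, -, hb⟩ := hguard (fun n => (f n).1.1) rfl (fun n => (hf n).1) 0
  exact (hf n).2 hb

instance : WellFoundedRelation GT := ⟨bfRel, bfRel_wf⟩

lemma guarded_bch {t : PseudoType} (hg : Guarded t) (h : thead t = TyHead.bullet) :
    Guarded (bch t) :=
  guarded_of_tbullet (by rw [← eq_tbullet_self h]; exact hg)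

lemma guarded_ach1 {t : PseudoType} (hg : Guarded t) (h : thead t = TyHead.arrow) :
    Guarded (ach t).1 :=
  guarded_child hg (child_ach h).1

lemma guarded_ach2 {t : PseudoType} (hg : Guarded t) (h : thead t = TyHead.arrow) :
    Guarded (ach t).2 :=
  guarded_child hg (child_ach h).2

lemma guarded_pch1 {t : PseudoType} (hg : Guarded t) (h : thead t = TyHead.prod) :
    Guarded (pch t).1 :=
  guarded_child hg (child_pch h).1

lemma guarded_pch2 {t : PseudoType} (hg : Guarded t) (h : thead t = TyHead.prod) :
    Guarded (pch t).2 :=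
  guarded_child hg (child_pch h).2

/-! ### the semantics of guarded types -/

noncomputable def G : (k : ℕ) → (t : GT) → Set Expr
  | 0, _ => Set.univ
  | (k+1), t =>
    if hb : thead t.1 = TyHead.bullet then
      G k ⟨bch t.1, guarded_bch t.2 hb⟩
    else if ha : thead t.1 = TyHead.arrow then
      {e | HasWhnf e ∧ ∀ j, j ≤ k + 1 → ∀ f, f ∈ G j ⟨(ach t.1).1, guarded_ach1 t.2 ha⟩ →
        Expr.app e f ∈ G j ⟨(ach t.1).2, guarded_ach2 t.2 ha⟩}
    else if hp : thead t.1 = TyHead.prod then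
      {e | HasWhnf e ∧ ∀ j, j ≤ k + 1 →
        Expr.app (.const .cfst) e ∈ G j ⟨(pch t.1).1, guarded_pch1 t.2 hp⟩ ∧
        Expr.app (.const .csnd) e ∈ G j ⟨(pch t.1).2, guarded_pch2 t.2 hp⟩}
    else {e | HasWhnf e}
  termination_by k t => (k, t)
  decreasing_by
  · exact Prod.Lex.left _ _ (Nat.lt_succ_self k)
  · rcases Nat.lt_or_ge j (k+1) with hj' | hj'
    · exact Prod.Lex.left _ _ hj'
    · have : j = k + 1 := by omega
      subst this
      exact Prod.Lex.right _ ⟨(child_ach ha).1, by rw [ha]; exact fun hh => TyHead.noConfusion hh⟩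
  · rcases Nat.lt_or_ge j (k+1) with hj' | hj'
    · exact Prod.Lex.left _ _ hj'
    · have : j = k + 1 := by omega
      subst this
      exact Prod.Lex.right _ ⟨(child_ach ha).2, by rw [ha]; exact fun hh => TyHead.noConfusion hh⟩
  · rcases Nat.lt_or_ge j (k+1) with hj' | hj'
    · exact Prod.Lex.left _ _ hj'
    · have : j = k + 1 := by omega
      subst this
      exact Prod.Lex.right _ ⟨(child_pch hp).1, by rw [hp]; exact fun hh => TyHead.noConfusion hh⟩
  · rcases Nat.lt_or_ge j (k+1) with hj' | hj'
    · exact Prod.Lex.left _ _ hj'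
    · have : j = k + 1 := by omega
      subst this
      exact Prod.Lex.right _ ⟨(child_pch hp).2, by rw [hp]; exact fun hh => TyHead.noConfusion hh⟩

/-! ### equation lemmas for G -/

lemma G_zero (t : GT) : G 0 t = Set.univ := by rw [G]

lemma G_bullet {u : PseudoType} (h : Guarded (tbullet u)) (h' : Guarded u) (k : ℕ) :
    G (k+1) ⟨tbullet u, h⟩ = G k ⟨u, h'⟩ := by
  rw [G.eq_2, dif_pos (thead_tbullet u)]
  exact congrArg (G k) (Subtype.ext (bch_tbullet u))

lemma thead_tarrow_ne' (a b : PseudoType) : ¬ thead (tarrow a b) = TyHead.bullet :=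
  thead_tarrow_ne a b
lemma thead_tprod_ne_arrow (a b : PseudoType) : ¬ thead (tprod a b) = TyHead.arrow := by
  rw [thead_tprod]; exact fun hh => TyHead.noConfusion hh

lemma G_arrow_elim {a b : PseudoType} {h : Guarded (tarrow a b)} {k : ℕ} {e : Expr}
    (he : e ∈ G (k+1) ⟨tarrow a b, h⟩) :
    HasWhnf e ∧ ∀ j, j ≤ k+1 → ∀ f (ha : Guarded a) (hb : Guarded b),
      f ∈ G j ⟨a, ha⟩ → Expr.app e f ∈ G j ⟨b, hb⟩ := by
  rw [G.eq_2, dif_neg (thead_tarrow_ne a b), dif_pos (thead_tarrow a b)] at he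
  obtain ⟨h1, h2⟩ := he
  refine ⟨h1, ?_⟩
  intro j hj f ha hb hf
  have e1 : (⟨(ach (tarrow a b)).1, guarded_ach1 h (thead_tarrow a b)⟩ : GT) = ⟨a, ha⟩ :=
    Subtype.ext (show (ach (tarrow a b)).1 = a by rw [ach_tarrow])
  have e2 : (⟨(ach (tarrow a b)).2, guarded_ach2 h (thead_tarrow a b)⟩ : GT) = ⟨b, hb⟩ :=
    Subtype.ext (show (ach (tarrow a b)).2 = b by rw [ach_tarrow])
  rw [← e1] at hf
  have h3 := h2 j hj f hf
  rw [e2] at h3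
  exact h3

lemma G_arrow_intro {a b : PseudoType} {h : Guarded (tarrow a b)} {ha : Guarded a}
    {hb : Guarded b} {k : ℕ} {e : Expr} (h1 : HasWhnf e)
    (h2 : ∀ j, j ≤ k+1 → ∀ f, f ∈ G j ⟨a, ha⟩ → Expr.app e f ∈ G j ⟨b, hb⟩) :
    e ∈ G (k+1) ⟨tarrow a b, h⟩ := by
  rw [G.eq_2, dif_neg (thead_tarrow_ne a b), dif_pos (thead_tarrow a b)]
  refine ⟨h1, ?_⟩
  intro j hj f hf
  have e1 : (⟨(ach (tarrow a b)).1, guarded_ach1 h (thead_tarrow a b)⟩ : GT) = ⟨a, ha⟩ :=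
    Subtype.ext (show (ach (tarrow a b)).1 = a by rw [ach_tarrow])
  have e2 : (⟨(ach (tarrow a b)).2, guarded_ach2 h (thead_tarrow a b)⟩ : GT) = ⟨b, hb⟩ :=
    Subtype.ext (show (ach (tarrow a b)).2 = b by rw [ach_tarrow])
  rw [e1] at hf
  have h3 := h2 j hj f hf
  rw [← e2] at h3
  exact h3

lemma G_prod_elim {a b : PseudoType} {h : Guarded (tprod a b)} {k : ℕ} {e : Expr}
    (he : e ∈ G (k+1) ⟨tprod a b, h⟩) :
    HasWhnf e ∧ ∀ j, j ≤ k+1 → ∀ (ha : Guarded a) (hb : Guarded b),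
      Expr.app (.const .cfst) e ∈ G j ⟨a, ha⟩ ∧ Expr.app (.const .csnd) e ∈ G j ⟨b, hb⟩ := by
  rw [G.eq_2, dif_neg (thead_tprod_ne a b), dif_neg (thead_tprod_ne_arrow a b),
    dif_pos (thead_tprod a b)] at he
  obtain ⟨h1, h2⟩ := he
  refine ⟨h1, ?_⟩
  intro j hj ha hb
  have e1 : (⟨(pch (tprod a b)).1, guarded_pch1 h (thead_tprod a b)⟩ : GT) = ⟨a, ha⟩ :=
    Subtype.ext (show (pch (tprod a b)).1 = a by rw [pch_tprod])
  have e2 : (⟨(pch (tprod a b)).2, guarded_pch2 h (thead_tprod a b)⟩ : GT) = ⟨b, hb⟩ :=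
    Subtype.ext (show (pch (tprod a b)).2 = b by rw [pch_tprod])
  obtain ⟨h3, h4⟩ := h2 j hj
  rw [e1] at h3
  rw [e2] at h4
  exact ⟨h3, h4⟩

lemma G_prod_intro {a b : PseudoType} {h : Guarded (tprod a b)} {ha : Guarded a}
    {hb : Guarded b} {k : ℕ} {e : Expr} (h1 : HasWhnf e)
    (h2 : ∀ j, j ≤ k+1 →
      Expr.app (.const .cfst) e ∈ G j ⟨a, ha⟩ ∧ Expr.app (.const .csnd) e ∈ G j ⟨b, hb⟩) :
    e ∈ G (k+1) ⟨tprod a b, h⟩ := by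
  rw [G.eq_2, dif_neg (thead_tprod_ne a b), dif_neg (thead_tprod_ne_arrow a b),
    dif_pos (thead_tprod a b)]
  refine ⟨h1, ?_⟩
  intro j hj
  have e1 : (⟨(pch (tprod a b)).1, guarded_pch1 h (thead_tprod a b)⟩ : GT) = ⟨a, ha⟩ :=
    Subtype.ext (show (pch (tprod a b)).1 = a by rw [pch_tprod])
  have e2 : (⟨(pch (tprod a b)).2, guarded_pch2 h (thead_tprod a b)⟩ : GT) = ⟨b, hb⟩ :=
    Subtype.ext (show (pch (tprod a b)).2 = b by rw [pch_tprod])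
  obtain ⟨h3, h4⟩ := h2 j hj
  rw [← e1] at h3
  rw [← e2] at h4
  exact ⟨h3, h4⟩

lemma G_nat {h : Guarded tnat} {k : ℕ} : G (k+1) ⟨tnat, h⟩ = {e | HasWhnf e} := by
  rw [G.eq_2, dif_neg (show ¬ thead tnat = TyHead.bullet by rw [thead_tnat]; exact fun hh => TyHead.noConfusion hh),
    dif_neg (show ¬ thead tnat = TyHead.arrow by rw [thead_tnat]; exact fun hh => TyHead.noConfusion hh),
    dif_neg (show ¬ thead tnat = TyHead.prod by rw [thead_tnat]; exact fun hh => TyHead.noConfusion hh)]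

lemma G_tvar {n : ℕ} {h : Guarded (tvar n)} {k : ℕ} :
    G (k+1) ⟨tvar n, h⟩ = {e | HasWhnf e} := by
  rw [G.eq_2, dif_neg (show ¬ thead (tvar n) = TyHead.bullet by rw [thead_tvar]; exact fun hh => TyHead.noConfusion hh),
    dif_neg (show ¬ thead (tvar n) = TyHead.arrow by rw [thead_tvar]; exact fun hh => TyHead.noConfusion hh),
    dif_neg (show ¬ thead (tvar n) = TyHead.prod by rw [thead_tvar]; exact fun hh => TyHead.noConfusion hh)]

/-! ### antitonicity of G -/

lemma G_le : ∀ (k j : ℕ), j ≤ k → ∀ (t : GT), G k t ⊆ G j t := by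
  intro k
  induction k using Nat.strong_induction_on with
  | _ k ihk =>
    intro j hj t
    cases k with
    | zero =>
      obtain rfl : j = 0 := by omega
      exact subset_rfl
    | succ k =>
      cases j with
      | zero => intro e _; rw [G_zero]; exact Set.mem_univ e
      | succ j =>
        obtain ⟨t, hgt⟩ := t
        rcases pt_cases t with ⟨u, rfl⟩ | ⟨a, b, rfl⟩ | ⟨a, b, rfl⟩ | rfl | ⟨n, rfl⟩
        · have hgu := guarded_of_tbullet hgt
          rw [G_bullet hgt hgu, G_bullet hgt hgu]
          exact ihk k (by omega) j (by omega) ⟨u, hgu⟩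
        · intro e he
          obtain ⟨h1, h2⟩ := G_arrow_elim he
          have hga := guarded_child hgt (child_tarrow.mpr (Or.inl rfl))
          have hgb := guarded_child hgt (child_tarrow.mpr (Or.inr rfl))
          exact G_arrow_intro (ha := hga) (hb := hgb) h1
            (fun i hi f hf => h2 i (by omega) f hga hgb hf)
        · intro e he
          obtain ⟨h1, h2⟩ := G_prod_elim he
          have hga := guarded_child hgt (child_tprod.mpr (Or.inl rfl))
          have hgb := guarded_child hgt (child_tprod.mpr (Or.inr rfl))
          exact G_prod_intro (ha := hga) (hb := hgb) h1
            (fun i hi => h2 i (by omega) hga hgb)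
        · intro e he
          rw [G_nat (k := k)] at he
          rw [G_nat (k := j)]
          exact he
        · intro e he
          rw [G_tvar (k := k)] at he
          rw [G_tvar (k := j)]
          exact he

/-! ### stuck terms inhabit every G -/

lemma stuck_G : ∀ (k : ℕ) (t : GT) {e : Expr}, Stuck e → e ∈ G k t := by
  intro k
  induction k using Nat.strong_induction_on with
  | _ k ihk =>
    cases k with
    | zero => intro t e _; rw [G_zero]; exact Set.mem_univ e
    | succ k =>
      intro t
      induction t using WellFounded.induction bfRel_wf with
      | _ t iht =>
        obtain ⟨t, hgt⟩ := t
        rcases pt_cases t with ⟨u, rfl⟩ | ⟨a, b, rfl⟩ | ⟨a, b, rfl⟩ | rfl | ⟨n, rfl⟩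
        · intro e hs
          rw [G_bullet hgt (guarded_of_tbullet hgt)]
          exact ihk k (by omega) _ hs
        · intro e hs
          have hga := guarded_child hgt (child_tarrow.mpr (Or.inl rfl))
          have hgb := guarded_child hgt (child_tarrow.mpr (Or.inr rfl))
          refine G_arrow_intro (ha := hga) (hb := hgb) (whnf_of_nf (stuck_nf hs)) ?_
          intro j hj f hf
          rcases Nat.lt_or_ge j (k+1) with hj' | hj'
          · exact ihk j (by omega) _ (Stuck.app f hs)
          · obtain rfl : j = k + 1 := by omega
            exact iht ⟨b, hgb⟩
              ⟨child_tarrow.mpr (Or.inr rfl), thead_tarrow_ne a b⟩ (Stuck.app f hs)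
        · intro e hs
          have hga := guarded_child hgt (child_tprod.mpr (Or.inl rfl))
          have hgb := guarded_child hgt (child_tprod.mpr (Or.inr rfl))
          refine G_prod_intro (ha := hga) (hb := hgb) (whnf_of_nf (stuck_nf hs)) ?_
          intro j hj
          rcases Nat.lt_or_ge j (k+1) with hj' | hj'
          · exact ⟨ihk j (by omega) _ (Stuck.pfst hs), ihk j (by omega) _ (Stuck.psnd hs)⟩
          · obtain rfl : j = k + 1 := by omega
            constructor
            · exact iht ⟨a, hga⟩
                ⟨child_tprod.mpr (Or.inl rfl), thead_tprod_ne a b⟩ (Stuck.pfst hs)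
            · exact iht ⟨b, hgb⟩
                ⟨child_tprod.mpr (Or.inr rfl), thead_tprod_ne a b⟩ (Stuck.psnd hs)
        · intro e hs; rw [G_nat]; exact whnf_of_nf (stuck_nf hs)
        · intro e hs; rw [G_tvar]; exact whnf_of_nf (stuck_nf hs)

/-! ### G is closed under expansion -/

def EClosed (S : Set Expr) : Prop := ∀ e e', Red e e' → e' ∈ S → e ∈ S

lemma G_eclosed : ∀ (k : ℕ) (t : GT), EClosed (G k t) := by
  intro k
  induction k using Nat.strong_induction_on with
  | _ k ihk =>
    cases k with
    | zero => intro t e e' _ _; rw [G_zero]; exact Set.mem_univ e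
    | succ k =>
      intro t
      induction t using WellFounded.induction bfRel_wf with
      | _ t iht =>
        obtain ⟨t, hgt⟩ := t
        rcases pt_cases t with ⟨u, rfl⟩ | ⟨a, b, rfl⟩ | ⟨a, b, rfl⟩ | rfl | ⟨n, rfl⟩
        · intro e e' hr he
          rw [G_bullet hgt (guarded_of_tbullet hgt)] at *
          exact ihk k (by omega) _ e e' hr he
        · intro e e' hr he
          obtain ⟨h1, h2⟩ := G_arrow_elim he
          have hga := guarded_child hgt (child_tarrow.mpr (Or.inl rfl))
          have hgb := guarded_child hgt (child_tarrow.mpr (Or.inr rfl))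
          refine G_arrow_intro (ha := hga) (hb := hgb) (whnf_expand hr h1) ?_
          intro j hj f hf
          have happ := h2 j hj f hga hgb hf
          rcases Nat.lt_or_ge j (k+1) with hj' | hj'
          · exact ihk j (by omega) _ _ _ (red_app_left hr) happ
          · obtain rfl : j = k + 1 := by omega
            exact iht ⟨b, hgb⟩
              ⟨child_tarrow.mpr (Or.inr rfl), thead_tarrow_ne a b⟩ _ _ (red_app_left hr) happ
        · intro e e' hr he
          obtain ⟨h1, h2⟩ := G_prod_elim he
          have hga := guarded_child hgt (child_tprod.mpr (Or.inl rfl))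
          have hgb := guarded_child hgt (child_tprod.mpr (Or.inr rfl))
          refine G_prod_intro (ha := hga) (hb := hgb) (whnf_expand hr h1) ?_
          intro j hj
          obtain ⟨h3, h4⟩ := h2 j hj hga hgb
          rcases Nat.lt_or_ge j (k+1) with hj' | hj'
          · exact ⟨ihk j (by omega) _ _ _ (red_fst_arg hr) h3,
              ihk j (by omega) _ _ _ (red_snd_arg hr) h4⟩
          · obtain rfl : j = k + 1 := by omega
            constructor
            · exact iht ⟨a, hga⟩
                ⟨child_tprod.mpr (Or.inl rfl), thead_tprod_ne a b⟩ _ _ (red_fst_arg hr) h3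
            · exact iht ⟨b, hgb⟩
                ⟨child_tprod.mpr (Or.inr rfl), thead_tprod_ne a b⟩ _ _ (red_snd_arg hr) h4
        · intro e e' hr he; rw [G_nat] at *; exact whnf_expand hr he
        · intro e e' hr he; rw [G_tvar] at *; exact whnf_expand hr he

/-! ### bullets and G -/

lemma G_bulletN {u : PseudoType} (h : Guarded u) :
    ∀ (k n : ℕ) (h2 : Guarded (tbulletN n u)), G k ⟨tbulletN n u, h2⟩ = G (k - n) ⟨u, h⟩ := by
  intro k
  induction k using Nat.strong_induction_on with
  | _ k ihk =>
    intro n h2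
    cases n with
    | zero => rfl
    | succ n =>
      cases k with
      | zero => rw [Nat.zero_sub, G_zero, G_zero]
      | succ k =>
        have h3 : Guarded (tbulletN n u) := by
          rw [tbulletN_succ] at h2; exact guarded_of_tbullet h2
        have he : (⟨tbulletN (n+1) u, h2⟩ : GT) = ⟨tbullet (tbulletN n u), by rw [← tbulletN_succ]; exact h2⟩ :=
          Subtype.ext (tbulletN_succ n u)
        rw [he, G_bullet _ h3, ihk k (by omega) n h3,
          show k + 1 - (n + 1) = k - n from by omega]

/-! ### the semantics of arbitrary pseudo-types -/

def GDom (j : ℕ) (a : PseudoType) (f : Expr) : Prop := ∀ h : Guarded a, f ∈ G j ⟨a, h⟩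

noncomputable def Lop (prev : ℕ → PseudoType → Set Expr) (k : ℕ) :
    (PseudoType → Set Expr) →o (PseudoType → Set Expr) where
  toFun S := fun t =>
    if thead t = TyHead.bullet then prev k (bch t)
    else if thead t = TyHead.arrow then
      {e | HasWhnf e ∧ (∀ f, GDom (k+1) (ach t).1 f → Expr.app e f ∈ S (ach t).2) ∧
        ∀ j, j ≤ k → ∀ f, GDom j (ach t).1 f → Expr.app e f ∈ prev j (ach t).2}
    else if thead t = TyHead.prod then
      {e | HasWhnf e ∧
        (Expr.app (.const .cfst) e ∈ S (pch t).1 ∧ Expr.app (.const .csnd) e ∈ S (pch t).2) ∧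
        ∀ j, j ≤ k → Expr.app (.const .cfst) e ∈ prev j (pch t).1 ∧
          Expr.app (.const .csnd) e ∈ prev j (pch t).2}
    else {e | HasWhnf e}
  monotone' := by
    intro S1 S2 hS t e he
    dsimp only at he ⊢
    split_ifs at he ⊢ with h1 h2 h3
    · exact he
    · obtain ⟨w1, w2, w3⟩ := he
      exact ⟨w1, fun f hf => hS _ (w2 f hf), w3⟩
    · obtain ⟨w1, ⟨w2a, w2b⟩, w3⟩ := he
      exact ⟨w1, ⟨hS _ w2a, hS _ w2b⟩, w3⟩
    · exact he

noncomputable def L : ℕ → PseudoType → Set Expr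
  | 0 => fun _ => Set.univ
  | (k+1) => OrderHom.lfp (Lop (fun j t => L (min j k) t) k)
  termination_by k => k
  decreasing_by exact Nat.lt_succ_of_le (Nat.min_le_right _ _)

lemma L_zero (t : PseudoType) : L 0 t = Set.univ := by rw [L]

lemma L_succ (k : ℕ) : L (k+1) = (Lop (fun j t => L (min j k) t) k) (L (k+1)) := by
  have h := OrderHom.map_lfp (Lop (fun j t => L (min j k) t) k)
  conv_lhs => rw [L]
  rw [show L (k+1) = OrderHom.lfp (Lop (fun j t => L (min j k) t) k) from by rw [L]]
  exact h.symm

lemma Lop_apply (prev k S t) : (Lop prev k) S t =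
    (if thead t = TyHead.bullet then prev k (bch t)
    else if thead t = TyHead.arrow then
      {e | HasWhnf e ∧ (∀ f, GDom (k+1) (ach t).1 f → Expr.app e f ∈ S (ach t).2) ∧
        ∀ j, j ≤ k → ∀ f, GDom j (ach t).1 f → Expr.app e f ∈ prev j (ach t).2}
    else if thead t = TyHead.prod then
      {e | HasWhnf e ∧
        (Expr.app (.const .cfst) e ∈ S (pch t).1 ∧ Expr.app (.const .csnd) e ∈ S (pch t).2) ∧
        ∀ j, j ≤ k → Expr.app (.const .cfst) e ∈ prev j (pch t).1 ∧
          Expr.app (.const .csnd) e ∈ prev j (pch t).2}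
    else {e | HasWhnf e}) := rfl

lemma L_bullet (k : ℕ) (u : PseudoType) : L (k+1) (tbullet u) = L k u := by
  conv_lhs => rw [L_succ, Lop_apply]
  rw [if_pos (thead_tbullet u), bch_tbullet, min_self]

lemma L_nat (k : ℕ) : L (k+1) tnat = {e | HasWhnf e} := by
  conv_lhs => rw [L_succ, Lop_apply]
  rw [if_neg (by rw [thead_tnat]; exact fun hh => TyHead.noConfusion hh),
    if_neg (by rw [thead_tnat]; exact fun hh => TyHead.noConfusion hh),
    if_neg (by rw [thead_tnat]; exact fun hh => TyHead.noConfusion hh)]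

lemma L_var (k n : ℕ) : L (k+1) (tvar n) = {e | HasWhnf e} := by
  conv_lhs => rw [L_succ, Lop_apply]
  rw [if_neg (by rw [thead_tvar]; exact fun hh => TyHead.noConfusion hh),
    if_neg (by rw [thead_tvar]; exact fun hh => TyHead.noConfusion hh),
    if_neg (by rw [thead_tvar]; exact fun hh => TyHead.noConfusion hh)]

lemma L_arrow_mem (k : ℕ) (a b : PseudoType) (e : Expr) :
    e ∈ L (k+1) (tarrow a b) ↔
      (HasWhnf e ∧ (∀ f, GDom (k+1) a f → Expr.app e f ∈ L (k+1) b) ∧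
        ∀ j, j ≤ k → ∀ f, GDom j a f → Expr.app e f ∈ L j b) := by
  conv_lhs => rw [L_succ, Lop_apply]
  rw [if_neg (thead_tarrow_ne a b), if_pos (thead_tarrow a b), ach_tarrow]
  constructor
  · rintro ⟨h1, h2, h3⟩
    refine ⟨h1, h2, ?_⟩
    intro j hj f hf
    have := h3 j hj f hf
    rwa [Nat.min_eq_left hj] at this
  · rintro ⟨h1, h2, h3⟩
    refine ⟨h1, h2, ?_⟩
    intro j hj f hf
    rw [Nat.min_eq_left hj]
    exact h3 j hj f hf

lemma L_arrow_elim {k : ℕ} {a b : PseudoType} {e : Expr} (he : e ∈ L (k+1) (tarrow a b)) :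
    HasWhnf e ∧ ∀ j, j ≤ k+1 → ∀ f, GDom j a f → Expr.app e f ∈ L j b := by
  rw [L_arrow_mem] at he
  obtain ⟨h1, h2, h3⟩ := he
  refine ⟨h1, ?_⟩
  intro j hj f hf
  rcases Nat.lt_or_ge j (k+1) with hj' | hj'
  · exact h3 j (by omega) f hf
  · obtain rfl : j = k + 1 := by omega
    exact h2 f hf

lemma L_arrow_intro {k : ℕ} {a b : PseudoType} {e : Expr} (h1 : HasWhnf e)
    (h2 : ∀ j, j ≤ k+1 → ∀ f, GDom j a f → Expr.app e f ∈ L j b) :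
    e ∈ L (k+1) (tarrow a b) := by
  rw [L_arrow_mem]
  exact ⟨h1, fun f hf => h2 (k+1) (le_refl _) f hf, fun j hj f hf => h2 j (by omega) f hf⟩

lemma L_prod_mem (k : ℕ) (a b : PseudoType) (e : Expr) :
    e ∈ L (k+1) (tprod a b) ↔
      (HasWhnf e ∧ ∀ j, j ≤ k+1 → Expr.app (.const .cfst) e ∈ L j a ∧
        Expr.app (.const .csnd) e ∈ L j b) := by
  conv_lhs => rw [L_succ, Lop_apply]
  rw [if_neg (thead_tprod_ne a b), if_neg (thead_tprod_ne_arrow a b),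
    if_pos (thead_tprod a b), pch_tprod]
  constructor
  · rintro ⟨h1, ⟨h2a, h2b⟩, h3⟩
    refine ⟨h1, ?_⟩
    intro j hj
    rcases Nat.lt_or_ge j (k+1) with hj' | hj'
    · have := h3 j (by omega)
      rwa [Nat.min_eq_left (by omega : j ≤ k)] at this
    · obtain rfl : j = k + 1 := by omega
      exact ⟨h2a, h2b⟩
  · rintro ⟨h1, h2⟩
    refine ⟨h1, h2 (k+1) (le_refl _), ?_⟩
    intro j hj
    rw [Nat.min_eq_left hj]
    exact h2 j (by omega)

/-! ### antitonicity of L -/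

lemma L_le : ∀ (k j : ℕ), j ≤ k → ∀ t, L k t ⊆ L j t := by
  intro k
  induction k using Nat.strong_induction_on with
  | _ k ihk =>
    intro j hj t
    cases k with
    | zero =>
      obtain rfl : j = 0 := by omega
      exact subset_rfl
    | succ k =>
      cases j with
      | zero => intro e _; rw [L_zero]; exact Set.mem_univ e
      | succ j =>
        rcases pt_cases t with ⟨u, rfl⟩ | ⟨a, b, rfl⟩ | ⟨a, b, rfl⟩ | rfl | ⟨n, rfl⟩
        · rw [L_bullet, L_bullet]
          exact ihk k (by omega) j (by omega) u
        · intro e he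
          obtain ⟨h1, h2⟩ := L_arrow_elim he
          exact L_arrow_intro h1 (fun i hi f hf => h2 i (by omega) f hf)
        · intro e he
          rw [L_prod_mem] at he ⊢
          obtain ⟨h1, h2⟩ := he
          exact ⟨h1, fun i hi => h2 i (by omega)⟩
        · rw [L_nat (k := k), L_nat (k := j)]
        · rw [L_var (k := k) (n := n), L_var (k := j) (n := n)]

/-! ### L is closed under expansion -/

lemma L_eclosed : ∀ (k : ℕ) (t : PseudoType), EClosed (L k t) := by
  intro k
  induction k using Nat.strong_induction_on with
  | _ k ihk =>
    cases k with
    | zero => intro t e e' _ _; rw [L_zero]; exact Set.mem_univ e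
    | succ k =>
      have key : ∀ t, EClosed (OrderHom.lfp (Lop (fun j t => L (min j k) t) k) t) := by
        apply OrderHom.lfp_induction (f := Lop (fun j t => L (min j k) t) k) (p := fun S => ∀ t, EClosed (S t))
        · intro S hpS hle t e e' hr he
          rw [Lop_apply] at he ⊢
          split_ifs at he ⊢ with h1 h2 h3
          · exact ihk (min k k) (by omega) _ e e' hr he
          · obtain ⟨w1, w2, w3⟩ := he
            refine ⟨whnf_expand hr w1, fun f hf => hpS _ _ _ (red_app_left hr) (w2 f hf), ?_⟩
            intro j hj f hf
            exact ihk (min j k) (by omega) _ _ _ (red_app_left hr) (w3 j hj f hf)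
          · obtain ⟨w1, ⟨w2a, w2b⟩, w3⟩ := he
            refine ⟨whnf_expand hr w1,
              ⟨hpS _ _ _ (red_fst_arg hr) w2a, hpS _ _ _ (red_snd_arg hr) w2b⟩, ?_⟩
            intro j hj
            exact ⟨ihk (min j k) (by omega) _ _ _ (red_fst_arg hr) (w3 j hj).1,
              ihk (min j k) (by omega) _ _ _ (red_snd_arg hr) (w3 j hj).2⟩
          · exact whnf_expand hr he
        · intro s hs t e e' hr he
          rw [sSup_apply] at he ⊢
          simp only [Set.iSup_eq_iUnion, Set.mem_iUnion] at he ⊢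
          obtain ⟨S, hSx⟩ := he
          exact ⟨S, hs S.1 S.2 t e e' hr hSx⟩
      intro t e e' hr he
      rw [show L (k+1) = OrderHom.lfp (Lop (fun j t => L (min j k) t) k) from by rw [L]] at he ⊢
      exact key t e e' hr he

/-! ### L and G agree on guarded types -/

lemma collapse : ∀ (k : ℕ) (t : PseudoType) (h : Guarded t), L k t = G k ⟨t, h⟩ := by
  intro k
  induction k using Nat.strong_induction_on with
  | _ k ihk =>
    cases k with
    | zero => intro t h; rw [L_zero, G_zero]
    | succ k =>
      have main : ∀ p : GT, L (k+1) p.1 = G (k+1) p := by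
        intro p
        induction p using WellFounded.induction bfRel_wf with
        | _ p ihp =>
          obtain ⟨t, hgt⟩ := p
          rcases pt_cases t with ⟨u, rfl⟩ | ⟨a, b, rfl⟩ | ⟨a, b, rfl⟩ | rfl | ⟨n, rfl⟩
          · have hgu := guarded_of_tbullet hgt
            show L (k+1) (tbullet u) = _
            rw [L_bullet, G_bullet hgt hgu, ihk k (by omega) u hgu]
          · have hga := guarded_child hgt (child_tarrow.mpr (Or.inl rfl))
            have hgb := guarded_child hgt (child_tarrow.mpr (Or.inr rfl))
            have hbC : L (k+1) b = G (k+1) ⟨b, hgb⟩ :=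
              ihp ⟨b, hgb⟩ ⟨child_tarrow.mpr (Or.inr rfl), thead_tarrow_ne a b⟩
            have conv : ∀ j, j ≤ k+1 → ∀ (x : Expr), x ∈ L j b ↔ x ∈ G j ⟨b, hgb⟩ := by
              intro j hj x
              rcases Nat.lt_or_ge j (k+1) with hj' | hj'
              · rw [ihk j (by omega) b hgb]
              · obtain rfl : j = k+1 := by omega
                rw [hbC]
            ext e
            show e ∈ L (k+1) (tarrow a b) ↔ _
            constructor
            · intro he
              obtain ⟨h1, h2⟩ := L_arrow_elim he
              refine G_arrow_intro (ha := hga) (hb := hgb) h1 ?_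
              intro j hj f hf
              exact (conv j hj _).mp (h2 j hj f (fun h' => hf))
            · intro he
              obtain ⟨h1, h2⟩ := G_arrow_elim he
              refine L_arrow_intro h1 ?_
              intro j hj f hf
              exact (conv j hj _).mpr (h2 j hj f hga hgb (hf hga))
          · have hga := guarded_child hgt (child_tprod.mpr (Or.inl rfl))
            have hgb := guarded_child hgt (child_tprod.mpr (Or.inr rfl))
            have haC : L (k+1) a = G (k+1) ⟨a, hga⟩ :=
              ihp ⟨a, hga⟩ ⟨child_tprod.mpr (Or.inl rfl), thead_tprod_ne a b⟩
            have hbC : L (k+1) b = G (k+1) ⟨b, hgb⟩ :=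
              ihp ⟨b, hgb⟩ ⟨child_tprod.mpr (Or.inr rfl), thead_tprod_ne a b⟩
            have conva : ∀ j, j ≤ k+1 → ∀ (x : Expr), x ∈ L j a ↔ x ∈ G j ⟨a, hga⟩ := by
              intro j hj x
              rcases Nat.lt_or_ge j (k+1) with hj' | hj'
              · rw [ihk j (by omega) a hga]
              · obtain rfl : j = k+1 := by omega
                rw [haC]
            have convb : ∀ j, j ≤ k+1 → ∀ (x : Expr), x ∈ L j b ↔ x ∈ G j ⟨b, hgb⟩ := by
              intro j hj x
              rcases Nat.lt_or_ge j (k+1) with hj' | hj'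
              · rw [ihk j (by omega) b hgb]
              · obtain rfl : j = k+1 := by omega
                rw [hbC]
            ext e
            show e ∈ L (k+1) (tprod a b) ↔ _
            constructor
            · intro he
              rw [L_prod_mem] at he
              obtain ⟨h1, h2⟩ := he
              refine G_prod_intro (ha := hga) (hb := hgb) h1 ?_
              intro j hj
              exact ⟨(conva j hj _).mp (h2 j hj).1, (convb j hj _).mp (h2 j hj).2⟩
            · intro he
              obtain ⟨h1, h2⟩ := G_prod_elim he
              rw [L_prod_mem]
              refine ⟨h1, ?_⟩
              intro j hj
              obtain ⟨h3, h4⟩ := h2 j hj hga hgb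
              exact ⟨(conva j hj _).mpr h3, (convb j hj _).mpr h4⟩
          · show L (k+1) tnat = _
            rw [L_nat, G_nat]
          · show L (k+1) (tvar n) = _
            rw [L_var, G_tvar]
      intro t h
      exact main ⟨t, h⟩

lemma L_bulletN : ∀ (k n : ℕ) (u : PseudoType), L k (tbulletN n u) = L (k - n) u := by
  intro k
  induction k using Nat.strong_induction_on with
  | _ k ihk =>
    intro n u
    cases n with
    | zero => rfl
    | succ n =>
      cases k with
      | zero => rw [Nat.zero_sub, L_zero, L_zero]
      | succ k =>
        rw [tbulletN_succ, L_bullet, ihk k (by omega) n u,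
          show k + 1 - (n + 1) = k - n from by omega]

/-! ### the constants inhabit their types -/

lemma const_G_zero : ∀ (k : ℕ) (h : Guarded tnat), (Expr.const .zero) ∈ G k ⟨tnat, h⟩ := by
  intro k h
  cases k with
  | zero => rw [G_zero]; exact Set.mem_univ _
  | succ k => rw [G_nat]; exact whnf_of_nf (nf_const _)

lemma const_G_succ : ∀ (k : ℕ) (h : Guarded (tarrow tnat tnat)),
    (Expr.const .succ) ∈ G k ⟨tarrow tnat tnat, h⟩ := by
  intro k h
  cases k with
  | zero => rw [G_zero]; exact Set.mem_univ _
  | succ k =>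
    refine G_arrow_intro (ha := guarded_tnat) (hb := guarded_tnat)
      (whnf_of_nf (nf_const _)) ?_
    intro j hj f hf
    cases j with
    | zero => rw [G_zero]; exact Set.mem_univ _
    | succ j =>
      rw [G_nat] at hf ⊢
      exact whnf_succ hf

lemma const_G_pair {t s : PseudoType} (ht : Guarded t) (hs : Guarded s) :
    ∀ (k : ℕ) (h : Guarded (tarrow t (tarrow s (tprod t s)))),
      (Expr.const .pair) ∈ G k ⟨tarrow t (tarrow s (tprod t s)), h⟩ := by
  intro k h
  cases k with
  | zero => rw [G_zero]; exact Set.mem_univ _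
  | succ k =>
    refine G_arrow_intro (ha := ht) (hb := guarded_tarrow hs (guarded_tprod ht hs))
      (whnf_of_nf (nf_const _)) ?_
    intro j hj f hf
    cases j with
    | zero => rw [G_zero]; exact Set.mem_univ _
    | succ j =>
      refine G_arrow_intro (ha := hs) (hb := guarded_tprod ht hs)
        (whnf_of_nf (nf_pair_partial f)) ?_
      intro i hi g hg
      cases i with
      | zero => rw [G_zero]; exact Set.mem_univ _
      | succ i =>
        refine G_prod_intro (ha := ht) (hb := hs) (whnf_of_nf (nf_mkPair f g)) ?_
        intro m hm
        constructor
        · refine G_eclosed m ⟨t, ht⟩ _ _ (red_fst_pair f g) ?_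
          exact G_le (j+1) m (by omega) _ hf
        · refine G_eclosed m ⟨s, hs⟩ _ _ (red_snd_pair f g) ?_
          exact G_le (i+1) m (by omega) _ hg

lemma const_G_cfst {t s : PseudoType} (ht : Guarded t) (hs : Guarded s) :
    ∀ (k : ℕ) (h : Guarded (tarrow (tprod t s) t)),
      (Expr.const .cfst) ∈ G k ⟨tarrow (tprod t s) t, h⟩ := by
  intro k h
  cases k with
  | zero => rw [G_zero]; exact Set.mem_univ _
  | succ k =>
    refine G_arrow_intro (ha := guarded_tprod ht hs) (hb := ht)
      (whnf_of_nf (nf_const _)) ?_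
    intro j hj f hf
    cases j with
    | zero => rw [G_zero]; exact Set.mem_univ _
    | succ j =>
      obtain ⟨-, h2⟩ := G_prod_elim hf
      exact (h2 (j+1) (le_refl _) ht hs).1

lemma const_G_csnd {t s : PseudoType} (ht : Guarded t) (hs : Guarded s) :
    ∀ (k : ℕ) (h : Guarded (tarrow (tprod t s) s)),
      (Expr.const .csnd) ∈ G k ⟨tarrow (tprod t s) s, h⟩ := by
  intro k h
  cases k with
  | zero => rw [G_zero]; exact Set.mem_univ _
  | succ k =>
    refine G_arrow_intro (ha := guarded_tprod ht hs) (hb := hs)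
      (whnf_of_nf (nf_const _)) ?_
    intro j hj f hf
    cases j with
    | zero => rw [G_zero]; exact Set.mem_univ _
    | succ j =>
      obtain ⟨-, h2⟩ := G_prod_elim hf
      exact (h2 (j+1) (le_refl _) ht hs).2

lemma const_L {c : Const} {u : PseudoType} (hk : KappaTy c u) (k : ℕ) :
    (Expr.const c) ∈ L k u := by
  rw [collapse k u (kappa_guarded hk)]
  cases hk with
  | pair ht hs => exact const_G_pair ht.2 hs.2 k _
  | fst ht hs => exact const_G_cfst ht.2 hs.2 k _
  | snd ht hs => exact const_G_csnd ht.2 hs.2 k _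
  | zero => exact const_G_zero k _
  | succ => exact const_G_succ k _

/-! ### the fundamental lemma -/

theorem FL {Γ : Ctx} {e : Expr} {t : PseudoType} (h : Types Γ e t) :
    ∀ (k : ℕ) (σ : ℕ → Expr),
      (∀ x u, Γ x = some u → ∀ hg : Guarded u, σ x ∈ G k ⟨u, hg⟩) →
      substE σ e ∈ L k t := by
  induction h with
  | @ax Γ x t hx ht =>
    intro k σ hσ
    show σ x ∈ L k t
    rw [collapse k t ht.2]
    exact hσ x t hx ht.2
  | const hk => exact fun k σ hσ => const_L hk k
  | @bulletI Γ e t ht ih =>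
    intro k σ hσ
    cases k with
    | zero => rw [L_zero]; exact Set.mem_univ _
    | succ k =>
      rw [L_bullet]
      exact L_le (k+1) k (by omega) t (ih (k+1) σ hσ)
  | @arrowI Γ e n t s hb ih =>
    intro k σ hσ
    show Expr.lam (substE (liftSub σ) e) ∈ _
    rw [L_bulletN]
    rcases hK : k - n with _ | K
    · rw [L_zero]; exact Set.mem_univ _
    · have hkn : n ≤ k := by omega
      refine L_arrow_intro (whnf_of_nf (nf_lam _)) ?_
      intro j hj f hf
      apply L_eclosed j s _ _ (red_beta _ f)
      rw [subst0_substE]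
      have henv : ∀ x u, (Ctx.cons (tbulletN n t) Γ) x = some u →
          ∀ hg : Guarded u, (sub1 f σ) x ∈ G (j + n) ⟨u, hg⟩ := by
        intro x u hx hg
        cases x with
        | zero =>
          obtain rfl := Option.some.inj hx
          show f ∈ G (j+n) ⟨tbulletN n t, hg⟩
          rw [G_bulletN (guarded_of_tbulletN hg), show j + n - n = j from by omega]
          exact hf (guarded_of_tbulletN hg)
        | succ x =>
          show σ x ∈ _
          exact G_le k (j+n) (by omega) _ (hσ x u hx hg)
      have := ih (j + n) (sub1 f σ) henv
      rw [L_bulletN, show j + n - n = j from by omega] at this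
      exact this
  | @arrowE Γ e₁ e₂ n t s h1 h2 ih1 ih2 =>
    intro k σ hσ
    show Expr.app (substE σ e₁) (substE σ e₂) ∈ _
    rw [L_bulletN]
    have hi1 := ih1 k σ hσ
    rw [L_bulletN] at hi1
    rcases hK : k - n with _ | K
    · rw [L_zero]; exact Set.mem_univ _
    · rw [hK] at hi1
      obtain ⟨-, hap⟩ := L_arrow_elim hi1
      apply hap (K+1) (le_refl _)
      intro hgt
      have hi2 := ih2 k σ hσ
      rw [L_bulletN, hK, collapse (K+1) t hgt] at hi2
      exact hi2

/-! ### Lemma A: typable at a binf-free type implies whnf -/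

theorem whnf_of_types {Γ : Ctx} {e : Expr} {T : PseudoType} (hT : BinfFree T)
    (h : Types Γ e T) : HasWhnf e := by
  obtain ⟨n, u, rfl, hu⟩ := bf_strip hT
  have hFL := FL h (n+1) Expr.var (fun x w hw hg => stuck_G (n+1) _ (Stuck.var x))
  rw [substE_var, L_bulletN, show n + 1 - n = 1 from by omega] at hFL
  rcases pt_cases u with ⟨u', rfl⟩ | ⟨a, b, rfl⟩ | ⟨a, b, rfl⟩ | rfl | ⟨m, rfl⟩
  · exact absurd (thead_tbullet u') hu
  · exact (L_arrow_elim (k := 0) hFL).1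
  · exact ((L_prod_mem 0 a b e).mp hFL).1
  · rw [L_nat] at hFL; exact hFL
  · rw [L_var] at hFL; exact hFL

/-! ### binf-free contexts -/

def BfCtx (Γ : Ctx) : Prop := ∀ x s, Γ x = some s → BinfFree s

lemma stuck_bf {Γ : Ctx} (hΓ : BfCtx Γ) {e : Expr} (hs : Stuck e) :
    ∀ {T : PseudoType}, Types Γ e T → BinfFree T := by
  induction hs with
  | var x =>
    intro T h
    obtain ⟨m, u, hx, hu, rfl⟩ := inv_var h
    exact bf_tbulletN (hΓ x u hx)
  | app f hs ih =>
    intro T h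
    obtain ⟨n, a, b, rfl, h1, h2⟩ := inv_app h
    exact bf_tbulletN (bf_tarrow_right (bf_of_tbulletN (ih h1)))
  | pfst hs ih =>
    intro T h
    obtain ⟨n, a, b, rfl, h1, h2⟩ := inv_app h
    obtain ⟨m, w, hk, he⟩ := inv_const h1
    cases hk with
    | @fst x y hx hy =>
      obtain ⟨rfl, he2⟩ := bulletN_inj (thead_tarrow_ne _ _) (thead_tarrow_ne _ _) he
      obtain ⟨rfl, rfl⟩ := tarrow_inj he2
      exact bf_tbulletN (bf_tprod_left (bf_of_tbulletN (ih h2)))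
  | psnd hs ih =>
    intro T h
    obtain ⟨n, a, b, rfl, h1, h2⟩ := inv_app h
    obtain ⟨m, w, hk, he⟩ := inv_const h1
    cases hk with
    | @snd x y hx hy =>
      obtain ⟨rfl, he2⟩ := bulletN_inj (thead_tarrow_ne _ _) (thead_tarrow_ne _ _) he
      obtain ⟨rfl, rfl⟩ := tarrow_inj he2
      exact bf_tbulletN (bf_tprod_right (bf_of_tbulletN (ih h2)))

/-! ### clash lemma -/

lemma clash {n m : ℕ} {u v : PseudoType} (hu : thead u ≠ TyHead.bullet)
    (hv : thead v ≠ TyHead.bullet) (hne : thead u ≠ thead v)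
    (h : tbulletN n u = tbulletN m v) : False := by
  obtain ⟨-, rfl⟩ := bulletN_inj hu hv h
  exact hne rfl

/-! ### structure of normal forms -/

lemma struct_main : ∀ (N : ℕ) (u : Expr), sizeOf u ≤ N → ∀ {Γ : Ctx} {T : PseudoType},
    NormalForm u → Types Γ u T →
    ((∀ n p q, T = tbulletN n (tprod p q) → Stuck u ∨ ∃ a b, u = mkPair a b) ∧
     (∀ n a b, T = tbulletN n (tarrow a b) → Stuck u ∨ (∃ d, u = Expr.lam d) ∨
       u = .const .pair ∨ (∃ x, u = .app (.const .pair) x) ∨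
       u = .const .cfst ∨ u = .const .csnd ∨ u = .const .succ)) := by
  intro N
  induction N with
  | zero =>
    intro u hsz
    exfalso
    cases u <;> simp at hsz
  | succ N ihN =>
    intro u hsz Γ T hnf hty
    cases u with
    | var x => exact ⟨fun _ _ _ _ => Or.inl (Stuck.var x), fun _ _ _ _ => Or.inl (Stuck.var x)⟩
    | const c =>
      obtain ⟨m, w, hk, he⟩ := inv_const hty
      constructor
      · intro n p q hTeq
        rw [hTeq] at he
        exfalso
        cases hk with
        | pair h1 h2 =>
          exact clash (thead_tprod_ne _ _) (thead_tarrow_ne _ _)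
            (by rw [thead_tprod, thead_tarrow]; exact fun hh => TyHead.noConfusion hh) he
        | fst h1 h2 =>
          exact clash (thead_tprod_ne _ _) (thead_tarrow_ne _ _)
            (by rw [thead_tprod, thead_tarrow]; exact fun hh => TyHead.noConfusion hh) he
        | snd h1 h2 =>
          exact clash (thead_tprod_ne _ _) (thead_tarrow_ne _ _)
            (by rw [thead_tprod, thead_tarrow]; exact fun hh => TyHead.noConfusion hh) he
        | zero =>
          exact clash (thead_tprod_ne _ _) thead_tnat_ne
            (by rw [thead_tprod, thead_tnat]; exact fun hh => TyHead.noConfusion hh) he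
        | succ =>
          exact clash (thead_tprod_ne _ _) (thead_tarrow_ne _ _)
            (by rw [thead_tprod, thead_tarrow]; exact fun hh => TyHead.noConfusion hh) he
      · intro n a b hTeq
        cases hk with
        | pair h1 h2 => exact Or.inr (Or.inr (Or.inl rfl))
        | fst h1 h2 => exact Or.inr (Or.inr (Or.inr (Or.inr (Or.inl rfl))))
        | snd h1 h2 => exact Or.inr (Or.inr (Or.inr (Or.inr (Or.inr (Or.inl rfl)))))
        | zero =>
          rw [hTeq] at he
          exact absurd he (fun he => clash (thead_tarrow_ne _ _) thead_tnat_ne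
            (by rw [thead_tarrow, thead_tnat]; exact fun hh => TyHead.noConfusion hh) he)
        | succ => exact Or.inr (Or.inr (Or.inr (Or.inr (Or.inr (Or.inr rfl)))))
    | lam d =>
      obtain ⟨m, a', b', hTe, -⟩ := inv_lam hty
      constructor
      · intro n p q hTeq
        rw [hTeq] at hTe
        exact absurd hTe (fun hTe => clash (thead_tprod_ne _ _) (thead_tarrow_ne _ _)
          (by rw [thead_tprod, thead_tarrow]; exact fun hh => TyHead.noConfusion hh) hTe)
      · intro n a b hTeq
        exact Or.inr (Or.inl ⟨d, rfl⟩)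
    | app u v =>
      have hnu : NormalForm u := nf_app_left hnf
      obtain ⟨n', c, d, hT, h1, h2⟩ := inv_app hty
      have hszu : sizeOf u ≤ N := by
        rw [Expr.app.sizeOf_spec] at hsz
        omega
      have hszv : sizeOf v ≤ N := by
        rw [Expr.app.sizeOf_spec] at hsz
        omega
      have classifier := (ihN u hszu hnu h1).2 n' c d rfl
      rcases classifier with hstu | ⟨d', rfl⟩ | rfl | ⟨x, rfl⟩ | rfl | rfl | rfl
      · exact ⟨fun _ _ _ _ => Or.inl (Stuck.app v hstu),
          fun _ _ _ _ => Or.inl (Stuck.app v hstu)⟩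
      · exact absurd (red_beta d' v) (fun hr => hnf _ hr)
      · -- u = const pair
        obtain ⟨m, w, hk, he⟩ := inv_const h1
        cases hk with
        | @pair p' q' hp hq =>
          obtain ⟨rfl, he2⟩ := bulletN_inj (thead_tarrow_ne _ _) (thead_tarrow_ne _ _) he
          obtain ⟨rfl, rfl⟩ := tarrow_inj he2
          constructor
          · intro n p q hTeq
            rw [hT] at hTeq
            exact absurd hTeq (fun hh => clash (thead_tarrow_ne _ _) (thead_tprod_ne _ _)
              (by rw [thead_tarrow, thead_tprod]; exact fun hh => TyHead.noConfusion hh) hh)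
          · intro n a b hTeq
            exact Or.inr (Or.inr (Or.inr (Or.inl ⟨v, rfl⟩)))
      · -- u = app pair x : whole term is mkPair x v
        obtain ⟨j, p', q', hTe, -, -⟩ := inv_mkPair (show Types Γ (mkPair x v) T from hty)
        constructor
        · intro n p q hTeq
          exact Or.inr ⟨x, v, rfl⟩
        · intro n a b hTeq
          rw [hTeq] at hTe
          exact absurd hTe (fun hh => clash (thead_tarrow_ne _ _) (thead_tprod_ne _ _)
            (by rw [thead_tarrow, thead_tprod]; exact fun hh => TyHead.noConfusion hh) hh)
      · -- u = const cfst
        obtain ⟨m, w, hk, he⟩ := inv_const h1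
        cases hk with
        | @fst x y hx hy =>
          obtain ⟨rfl, he2⟩ := bulletN_inj (thead_tarrow_ne _ _) (thead_tarrow_ne _ _) he
          obtain ⟨rfl, rfl⟩ := tarrow_inj he2
          have hnv : NormalForm v := nf_fst_arg' hnf
          have hv := (ihN v hszv hnv h2).1 n' _ _ rfl
          rcases hv with hstv | ⟨a', b', rfl⟩
          · exact ⟨fun _ _ _ _ => Or.inl (Stuck.pfst hstv),
              fun _ _ _ _ => Or.inl (Stuck.pfst hstv)⟩
          · exact absurd (red_fst_pair a' b') (fun hr => hnf _ hr)
      · -- u = const csnd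
        obtain ⟨m, w, hk, he⟩ := inv_const h1
        cases hk with
        | @snd x y hx hy =>
          obtain ⟨rfl, he2⟩ := bulletN_inj (thead_tarrow_ne _ _) (thead_tarrow_ne _ _) he
          obtain ⟨rfl, rfl⟩ := tarrow_inj he2
          have hnv : NormalForm v := nf_snd_arg' hnf
          have hv := (ihN v hszv hnv h2).1 n' _ _ rfl
          rcases hv with hstv | ⟨a', b', rfl⟩
          · exact ⟨fun _ _ _ _ => Or.inl (Stuck.psnd hstv),
              fun _ _ _ _ => Or.inl (Stuck.psnd hstv)⟩
          · exact absurd (red_snd_pair a' b') (fun hr => hnf _ hr)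
      · -- u = const succ
        obtain ⟨m, w, hk, he⟩ := inv_const h1
        cases hk with
        | succ =>
          obtain ⟨rfl, he2⟩ := bulletN_inj (thead_tarrow_ne _ _) (thead_tarrow_ne _ _) he
          obtain ⟨rfl, rfl⟩ := tarrow_inj he2
          constructor
          · intro n p q hTeq
            rw [hT] at hTeq
            exact absurd hTeq (fun hh => clash thead_tnat_ne (thead_tprod_ne _ _)
              (by rw [thead_tnat, thead_tprod]; exact fun hh => TyHead.noConfusion hh) hh)
          · intro n a b hTeq
            rw [hT] at hTeq
            exact absurd hTeq (fun hh => clash thead_tnat_ne (thead_tarrow_ne _ _)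
              (by rw [thead_tnat, thead_tarrow]; exact fun hh => TyHead.noConfusion hh) hh)

/-! ### spine argument lemmas -/

lemma spine_head_ty {Γ : Ctx} : ∀ (l : List Expr) {h : Expr} {T : PseudoType},
    Types Γ (spineApp h l) T → ∃ T', Types Γ h T' := by
  intro l
  induction l with
  | nil => exact fun h => ⟨_, h⟩
  | cons a l ih =>
    intro h T hty
    rw [spineApp_cons] at hty
    obtain ⟨T', hT'⟩ := ih hty
    obtain ⟨n, c, d, -, h1, -⟩ := inv_app hT'
    exact ⟨_, h1⟩

lemma args_stuckhead {Γ : Ctx} (hΓ : BfCtx Γ) : ∀ (l : List Expr) {h : Expr} {T : PseudoType},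
    Stuck h → Types Γ (spineApp h l) T → ∀ a ∈ l, ∃ s, BinfFree s ∧ Types Γ a s := by
  intro l
  induction l using List.reverseRecOn with
  | nil => intro h T _ _ a ha; exact absurd ha List.not_mem_nil
  | append_singleton l b ih =>
    intro h T hs hty a ha
    rw [spineApp_append] at hty
    obtain ⟨n, c, d, -, h1, h2⟩ := inv_app hty
    have hbf : BinfFree (tbulletN n (tarrow c d)) := stuck_bf hΓ (stuck_spine hs l) h1
    rcases List.mem_append.mp ha with hal | hab
    · exact ih hs h1 a hal
    · obtain rfl := List.mem_singleton.mp hab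
      exact ⟨tbulletN n c, bf_tbulletN (bf_tarrow_left (bf_of_tbulletN hbf)), h2⟩

lemma args_const {Γ : Ctx} (hΓ : BfCtx Γ) {c : Const} : ∀ (l : List Expr) {T : PseudoType},
    BinfFree T → NormalForm (spineApp (.const c) l) → Types Γ (spineApp (.const c) l) T →
    ∀ a ∈ l, ∃ s, BinfFree s ∧ Types Γ a s := by
  cases c with
  | pair =>
    intro l
    rcases l with _ | ⟨a1, _ | ⟨a2, _ | ⟨a3, rest⟩⟩⟩
    · intro T _ _ _ a ha; exact absurd ha List.not_mem_nil
    · intro T hT hnf hty a ha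
      obtain rfl : a = a1 := List.mem_singleton.mp ha
      obtain ⟨n, c, d, hTeq, h1, h2⟩ := inv_app hty
      obtain ⟨m, w, hk, he⟩ := inv_const h1
      cases hk with
      | @pair p q hp hq =>
        obtain ⟨rfl, he2⟩ := bulletN_inj (thead_tarrow_ne _ _) (thead_tarrow_ne _ _) he
        obtain ⟨rfl, rfl⟩ := tarrow_inj he2
        refine ⟨_, ?_, h2⟩
        apply bf_tbulletN
        rw [hTeq] at hT
        exact bf_tprod_left (bf_tarrow_right (bf_of_tbulletN hT))
    · intro T hT hnf hty a ha
      obtain ⟨n, p, q, hTeq, hp, hq⟩ := inv_mkPair hty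
      rw [hTeq] at hT
      rcases List.mem_cons.mp ha with rfl | ha2
      · exact ⟨tbulletN n p, bf_tbulletN (bf_tprod_left (bf_of_tbulletN hT)), hp⟩
      · obtain rfl := List.mem_singleton.mp ha2
        exact ⟨tbulletN n q, bf_tbulletN (bf_tprod_right (bf_of_tbulletN hT)), hq⟩
    · intro T hT hnf hty a ha
      exfalso
      rw [spineApp_cons, spineApp_cons, spineApp_cons] at hty
      obtain ⟨T', hT'⟩ := spine_head_ty rest hty
      obtain ⟨n, c, d, -, h1, -⟩ := inv_app hT'
      obtain ⟨j, p, q, hEe, -, -⟩ := inv_mkPair h1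
      exact clash (thead_tarrow_ne _ _) (thead_tprod_ne _ _)
        (by rw [thead_tarrow, thead_tprod]; exact fun hh => TyHead.noConfusion hh) hEe
  | cfst =>
    intro l
    rcases l with _ | ⟨u, rest⟩
    · intro T _ _ _ a ha; exact absurd ha List.not_mem_nil
    · intro T hT hnf hty a ha
      rw [spineApp_cons] at hty hnf
      obtain ⟨T', hT'⟩ := spine_head_ty rest hty
      obtain ⟨n, c, d, -, h1, h2⟩ := inv_app hT'
      obtain ⟨m, w, hk, he⟩ := inv_const h1
      cases hk with
      | @fst x y hx hy =>
        obtain ⟨rfl, he2⟩ := bulletN_inj (thead_tarrow_ne _ _) (thead_tarrow_ne _ _) he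
        obtain ⟨rfl, rfl⟩ := tarrow_inj he2
        have hnfu : NormalForm u := nf_fst_arg' (nf_spine_head hnf)
        have hstru := (struct_main (sizeOf u) u (le_refl _) hnfu h2).1 n _ _ rfl
        have hstu : Stuck u := by
          rcases hstru with hh | ⟨p, q, rfl⟩
          · exact hh
          · exact absurd (red_fst_pair p q) (fun hr => (nf_spine_head hnf) _ hr)
        rcases List.mem_cons.mp ha with rfl | ha2
        · exact ⟨_, stuck_bf hΓ hstu h2, h2⟩
        · exact args_stuckhead hΓ rest (Stuck.pfst hstu) hty a ha2
  | csnd =>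
    intro l
    rcases l with _ | ⟨u, rest⟩
    · intro T _ _ _ a ha; exact absurd ha List.not_mem_nil
    · intro T hT hnf hty a ha
      rw [spineApp_cons] at hty hnf
      obtain ⟨T', hT'⟩ := spine_head_ty rest hty
      obtain ⟨n, c, d, -, h1, h2⟩ := inv_app hT'
      obtain ⟨m, w, hk, he⟩ := inv_const h1
      cases hk with
      | @snd x y hx hy =>
        obtain ⟨rfl, he2⟩ := bulletN_inj (thead_tarrow_ne _ _) (thead_tarrow_ne _ _) he
        obtain ⟨rfl, rfl⟩ := tarrow_inj he2
        have hnfu : NormalForm u := nf_snd_arg' (nf_spine_head hnf)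
        have hstru := (struct_main (sizeOf u) u (le_refl _) hnfu h2).1 n _ _ rfl
        have hstu : Stuck u := by
          rcases hstru with hh | ⟨p, q, rfl⟩
          · exact hh
          · exact absurd (red_snd_pair p q) (fun hr => (nf_spine_head hnf) _ hr)
        rcases List.mem_cons.mp ha with rfl | ha2
        · exact ⟨_, stuck_bf hΓ hstu h2, h2⟩
        · exact args_stuckhead hΓ rest (Stuck.psnd hstu) hty a ha2
  | zero =>
    intro l
    rcases l with _ | ⟨a1, rest⟩
    · intro T _ _ _ a ha; exact absurd ha List.not_mem_nil
    · intro T hT hnf hty a ha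
      exfalso
      rw [spineApp_cons] at hty
      obtain ⟨T', hT'⟩ := spine_head_ty rest hty
      obtain ⟨n, c, d, -, h1, -⟩ := inv_app hT'
      obtain ⟨m, w, hk, he⟩ := inv_const h1
      cases hk
      exact clash (thead_tarrow_ne _ _) thead_tnat_ne
        (by rw [thead_tarrow, thead_tnat]; exact fun hh => TyHead.noConfusion hh) he
  | succ =>
    intro l
    rcases l with _ | ⟨a1, _ | ⟨a2, rest⟩⟩
    · intro T _ _ _ a ha; exact absurd ha List.not_mem_nil
    · intro T hT hnf hty a ha
      obtain rfl : a = a1 := List.mem_singleton.mp ha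
      obtain ⟨n, c, d, hTeq, h1, h2⟩ := inv_app hty
      obtain ⟨m, w, hk, he⟩ := inv_const h1
      cases hk with
      | succ =>
        obtain ⟨rfl, he2⟩ := bulletN_inj (thead_tarrow_ne _ _) (thead_tarrow_ne _ _) he
        obtain ⟨rfl, rfl⟩ := tarrow_inj he2
        exact ⟨tbulletN n tnat, bf_tbulletN bf_tnat, h2⟩
    · intro T hT hnf hty a ha
      exfalso
      rw [spineApp_cons, spineApp_cons] at hty
      obtain ⟨T', hT'⟩ := spine_head_ty rest hty
      obtain ⟨n, c, d, -, h1, -⟩ := inv_app hT'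
      obtain ⟨i, c', d', hEe, h3, -⟩ := inv_app h1
      obtain ⟨m, w, hk, he⟩ := inv_const h3
      cases hk with
      | succ =>
        obtain ⟨rfl, he2⟩ := bulletN_inj (thead_tarrow_ne _ _) (thead_tarrow_ne _ _) he
        obtain ⟨rfl, rfl⟩ := tarrow_inj he2
        exact clash (thead_tarrow_ne _ _) thead_tnat_ne
          (by rw [thead_tarrow, thead_tnat]; exact fun hh => TyHead.noConfusion hh) hEe

/-! ### invariant preservation -/

lemma inv_step {e f : Expr} (hi : ∃ Γ T, BfCtx Γ ∧ BinfFree T ∧ Types Γ e T)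
    (hsub : LLSub e f) : ∃ Γ T, BfCtx Γ ∧ BinfFree T ∧ Types Γ f T := by
  obtain ⟨Γ, T, hΓ, hT, hty⟩ := hi
  cases hsub with
  | lam hred =>
    have hty2 := redstar_sr hred hty
    obtain ⟨n, a, b, hTeq, hbody⟩ := inv_lam hty2
    rw [hTeq] at hT
    refine ⟨Ctx.cons (tbulletN n a) Γ, tbulletN n b, ?_, ?_, hbody⟩
    · intro x s hx
      cases x with
      | zero =>
        obtain rfl := Option.some.inj hx
        exact bf_tbulletN (bf_tarrow_left (bf_of_tbulletN hT))
      | succ x => exact hΓ x s hx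
    · exact bf_tbulletN (bf_tarrow_right (bf_of_tbulletN hT))
  | var hred hmem =>
    have hty2 := redstar_sr hred hty
    obtain ⟨s, hbf, hs⟩ := args_stuckhead hΓ _ (Stuck.var _) hty2 f hmem
    exact ⟨Γ, s, hΓ, hbf, hs⟩
  | const hred hnf hmem =>
    have hty2 := redstar_sr hred hty
    obtain ⟨s, hbf, hs⟩ := args_const hΓ _ hT hnf hty2 f hmem
    exact ⟨Γ, s, hΓ, hbf, hs⟩

/-- Productivity I: if `t` and all the types in `Γ` are
`•^∞`-free and `Γ ⊢ e : t` in λ•→, then the Lévy-Longo tree of `e` has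
no `⊥`'s. -/
theorem productivity_levy_longo (Γ : Ctx) (e : Expr) (t : PseudoType)
    (ht : BinfFree t) (hΓ : ∀ x s, Γ x = some s → BinfFree s)
    (h : Types Γ e t) : LLTBotFree e := by
  intro f hreach
  have hInv : ∃ Γ' T', BfCtx Γ' ∧ BinfFree T' ∧ Types Γ' f T' := by
    induction hreach with
    | refl => exact ⟨Γ, t, hΓ, ht, h⟩
    | tail hr hst ih => exact inv_step ih hst
  obtain ⟨Γ', T', -, hT', hty⟩ := hInv
  exact whnf_of_types hT' hty

end LambdaBullet
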